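/- arXiv:1510.03961 — 3 statements merged into one kernel-verified Lean document; each statement's English description precedes it below -/
import Mathlib

section
/- Let S be a simplicial set which is a quasicategory, and let ho S denote its homotopy category (the value at S of Mathlib's functor SSet.hoFunctor : SSet ⥤ Cat), whose objects are the 0-simplices of S and in which every 1-simplex e of S determines a morphism from its initial vertex δ₁ e to its terminal vertex δ₀ e. Then: (a) for all 0-simplices x, y of S and every morphism φ : x ⟶ y in ho S, there exists a 1-simplex e of S with δ₁ e = x and δ₀ e = y whose associated morphism in ho S equals φ; and (b) if e and e′ are 1-simplices of S with δ₁ e = δ₁ e′ = x and δ₀ e = δ₀ e′ = y whose associated morphisms in ho S coincide, then there exists a 2-simplex σ of S with δ₂ σ = e, δ₁ σ = e′, and δ₀ σ = σ₀ y (the degenerate 1-simplex at y); that is, e and e′ are homotopic. -/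
open CategoryTheory

universe u

namespace HoCat

variable (S : SSet.{u})

/-- The `n`-simplices of `S`. -/
abbrev Simp (n : ℕ) : Type u := S.obj (Opposite.op (SimplexCategory.mk n))

/-- The face map `δᵢ`. -/
abbrev δ {n : ℕ} (i : Fin (n + 2)) : Simp S (n + 1) → Simp S n :=
  SimplicialObject.δ S i

/-- The degeneracy map `σᵢ`. -/
abbrev σ {n : ℕ} (i : Fin (n + 1)) : Simp S n → Simp S (n + 1) :=
  SimplicialObject.σ S i

/-- The vertices of `S`, as the underlying type of the quiver of `1`-simplices. -/
def HoVert : Type u := Simp S 0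

/-- A vertex of `S`, as an object of the free category on the `1`-simplices. -/
def vert (x : Simp S 0) : HoVert S := x

/-- Edges from `x` to `y`: `1`-simplices `e` with `δ₁ e = x` and `δ₀ e = y`. -/
def HoEdge (x y : Simp S 0) : Type u :=
  { e : Simp S 1 // δ S 1 e = x ∧ δ S 0 e = y }

instance : Quiver.{u} (HoVert S) :=
  ⟨fun x y => HoEdge S x y⟩

variable {S}

/-- An edge, as a quiver arrow between vertices. -/
def edgeArrow {x y : Simp S 0} (e : HoEdge S x y) : vert S x ⟶ vert S y := e

variable (S)

/-- The relations on the free category on the `1`-simplices of `S` generated by the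
`2`-simplices: for each `2`-simplex `σ`, the composite of (the edges) `δ₂ σ` and `δ₀ σ` is
related to `δ₁ σ`; moreover each degenerate edge `σ₀ x` is related to the identity of `x`. -/
inductive HoRel : HomRel (Paths (HoVert S))
  | triangle (τ : Simp S 2) (x y z : Simp S 0)
      (e₀₁ : HoEdge S x y) (e₁₂ : HoEdge S y z) (e₀₂ : HoEdge S x z)
      (h₂ : e₀₁.1 = δ S 2 τ) (h₀ : e₁₂.1 = δ S 0 τ) (h₁ : e₀₂.1 = δ S 1 τ) :
      HoRel ((Paths.of (HoVert S)).map (edgeArrow e₀₁) ≫ (Paths.of (HoVert S)).map (edgeArrow e₁₂))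
        ((Paths.of (HoVert S)).map (edgeArrow e₀₂))
  | degenerate (x : Simp S 0) (e : HoEdge S x x) (he : e.1 = σ S 0 x) :
      HoRel ((Paths.of (HoVert S)).map (edgeArrow e)) (𝟙 ((Paths.of (HoVert S)).obj (vert S x)))

/-- The homotopy category of `S`: the quotient of the free category on the `1`-simplices of
`S` by the relations generated by the `2`-simplices. -/
abbrev Ho : Type u := CategoryTheory.Quotient (HoRel S)

variable {S}

/-- The morphism of `Ho S` associated to a `1`-simplex `e` with `δ₁ e = x` and `δ₀ e = y`. -/
def homOfEdge {x y : Simp S 0} (e : Simp S 1) (h₁ : δ S 1 e = x) (h₀ : δ S 0 e = y) :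
    (Quotient.functor (HoRel S)).obj ((Paths.of (HoVert S)).obj (vert S x)) ⟶
      (Quotient.functor (HoRel S)).obj ((Paths.of (HoVert S)).obj (vert S y)) :=
  (Quotient.functor (HoRel S)).map ((Paths.of (HoVert S)).map (edgeArrow (⟨e, h₁, h₀⟩ : HoEdge S x y)))

end HoCat

open HoCat

open Simplicial Opposite

namespace HornFiller

open SSet SimplexCategory

variable {S : SSet.{u}}

/-- generalized `factor_δ` for arbitrary domain -/
def fac {x : SimplexCategory} {n : ℕ} (f : x ⟶ ⦋n+1⦌) (j : Fin (n+2)) : x ⟶ ⦋n⦌ :=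
  f ≫ SimplexCategory.σ (Fin.predAbove 0 j)

lemma fac_spec {x : SimplexCategory} {n : ℕ} (f : x ⟶ ⦋n+1⦌) (j : Fin (n+2))
    (hj : ∀ k, f.toOrderHom k ≠ j) : fac f j ≫ SimplexCategory.δ j = f := by
  induction x using SimplexCategory.rec with
  | mk m => exact SimplexCategory.factor_δ_spec f j hj

lemma δ_cancel {x : SimplexCategory} {n : ℕ} {u v : x ⟶ ⦋n⦌} (j : Fin (n+2))
    (h : u ≫ SimplexCategory.δ j = v ≫ SimplexCategory.δ j) : u = v := by
  ext k : 3
  have := congr_arg (fun (w : x ⟶ ⦋n+1⦌) => w.toOrderHom k) h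
  dsimp [SimplexCategory.δ] at this
  exact Fin.succAbove_right_injective (p := j) this

lemma fac_comp {x y : SimplexCategory} {n : ℕ} (u : x ⟶ y) (f : y ⟶ ⦋n+1⦌) (j : Fin (n+2)) :
    fac (u ≫ f) j = u ≫ fac f j := Category.assoc _ _ _

end HornFiller

namespace HornFiller

open SSet SimplexCategory stdSimplex

variable {S : SSet.{u}} {n : ℕ}

variable (S) in
/-- Compatible face data for the horn `Λ[n+2, i]`. -/
structure FaceData (n : ℕ) (i : Fin (n+3)) where
  F : ∀ j : Fin (n+3), j ≠ i → S.obj (op ⦋n+1⦌)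
  compat : ∀ (j k : Fin (n+3)) (hj : j ≠ i) (hk : k ≠ i) (hjk : (j:ℕ) < (k:ℕ)),
    S.map (SimplexCategory.δ (⟨(j:ℕ), by have := k.isLt; omega⟩ : Fin (n+2))).op (F k hk) =
    S.map (SimplexCategory.δ (⟨(k:ℕ)-1, by have := k.isLt; omega⟩ : Fin (n+2))).op (F j hj)

variable {i : Fin (n+3)}

lemma fac_eq_aux (D : FaceData S n i) {x : SimplexCategory} (f : x ⟶ ⦋n+2⦌)
    {j k : Fin (n+3)} (hj : j ≠ i) (hk : k ≠ i)
    (hjf : ∀ a, f.toOrderHom a ≠ j) (hkf : ∀ a, f.toOrderHom a ≠ k)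
    (hjk : (j:ℕ) < (k:ℕ)) :
    S.map (fac f j).op (D.F j hj) = S.map (fac f k).op (D.F k hk) := by
  have hk3 := k.isLt
  set j' : Fin (n+2) := ⟨(j:ℕ), by omega⟩ with hj'
  set k' : Fin (n+2) := ⟨(k:ℕ)-1, by omega⟩ with hk'
  have hu : fac f k ≫ SimplexCategory.δ k = f := fac_spec f k hkf
  have hju : ∀ a, (fac f k).toOrderHom a ≠ j' := by
    intro a ha
    apply hjf a
    have h1 : f.toOrderHom a = (SimplexCategory.δ k).toOrderHom ((fac f k).toOrderHom a) := by
      conv_lhs => rw [← hu]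
      rfl
    rw [h1, ha]
    show k.succAbove j' = j
    rw [Fin.succAbove_of_castSucc_lt]
    · exact Fin.ext rfl
    · exact Fin.lt_def.mpr (show (j:ℕ) < k from hjk)
  have hv : fac (fac f k) j' ≫ SimplexCategory.δ j' = fac f k := fac_spec _ _ hju
  set v := fac (fac f k) j' with hvdef
  have hsucc : k'.succ = k := Fin.ext (by simp [hk']; omega)
  have hcast : (j'.castSucc : Fin (n+3)) = j := Fin.ext (by simp [hj'])
  have hδδ : SimplexCategory.δ j' ≫ SimplexCategory.δ k
      = SimplexCategory.δ k' ≫ SimplexCategory.δ j := by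
    rw [← hsucc, ← hcast]
    exact SimplexCategory.δ_comp_δ (by rw [Fin.le_def]; simp [hj', hk']; omega)
  have h1 : f = v ≫ SimplexCategory.δ j' ≫ SimplexCategory.δ k := by
    rw [← Category.assoc, hv, hu]
  have hfj : fac f j = v ≫ SimplexCategory.δ k' := by
    apply δ_cancel j
    rw [fac_spec f j hjf, Category.assoc, ← hδδ, ← h1]
  have hfk : fac f k = v ≫ SimplexCategory.δ j' := by
    apply δ_cancel k
    rw [fac_spec f k hkf, Category.assoc, ← h1]
  rw [hfj, hfk, op_comp, op_comp, FunctorToTypes.map_comp_apply, FunctorToTypes.map_comp_apply]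
  exact congrArg (S.map v.op) (D.compat j k hj hk hjk).symm

end HornFiller

namespace HornFiller

open SSet SimplexCategory stdSimplex

variable {S : SSet.{u}} {n : ℕ} {i : Fin (n+3)}

lemma exists_missing {m : SimplexCategoryᵒᵖ} (f : (Λ[n+2, i] : SSet.{u}).obj m) :
    ∃ j : Fin (n+3), j ≠ i ∧ ∀ a, (objEquiv f.1).toOrderHom a ≠ j := by
  have hf : Set.range (stdSimplex.asOrderHom f.1) ∪ {i} ≠ Set.univ := f.2
  rw [Set.ne_univ_iff_exists_notMem] at hf
  obtain ⟨j, hj⟩ := hf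
  simp only [Set.union_singleton, Set.mem_insert_iff, Set.mem_range, not_or, not_exists] at hj
  refine ⟨j, ?_, ?_⟩
  · intro h; exact hj.1 h
  · intro a h; exact hj.2 a h

/-- The index chosen for a horn simplex. -/
noncomputable def pick {m : SimplexCategoryᵒᵖ} (f : (Λ[n+2, i] : SSet.{u}).obj m) : Fin (n+3) :=
  (exists_missing f).choose

lemma pick_ne {m : SimplexCategoryᵒᵖ} (f : (Λ[n+2, i] : SSet.{u}).obj m) : pick f ≠ i :=
  (exists_missing f).choose_spec.1

lemma pick_missing {m : SimplexCategoryᵒᵖ} (f : (Λ[n+2, i] : SSet.{u}).obj m) :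
    ∀ a, (objEquiv f.1).toOrderHom a ≠ pick f :=
  (exists_missing f).choose_spec.2

lemma fac_eq (D : FaceData S n i) {x : SimplexCategory} (f : x ⟶ ⦋n+2⦌)
    {j k : Fin (n+3)} (hj : j ≠ i) (hk : k ≠ i)
    (hjf : ∀ a, f.toOrderHom a ≠ j) (hkf : ∀ a, f.toOrderHom a ≠ k) :
    S.map (fac f j).op (D.F j hj) = S.map (fac f k).op (D.F k hk) := by
  rcases lt_trichotomy (j:ℕ) (k:ℕ) with h | h | h
  · exact fac_eq_aux D f hj hk hjf hkf h
  · obtain rfl : j = k := Fin.ext h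
    rfl
  · exact (fac_eq_aux D f hk hj hkf hjf h).symm

/-- The horn morphism determined by compatible face data. -/
noncomputable def hornHom (D : FaceData S n i) : (Λ[n+2, i] : SSet.{u}) ⟶ S where
  app m := TypeCat.ofHom fun f => S.map (fac (objEquiv f.1) (pick f)).op (D.F (pick f) (pick_ne f))
  naturality m m' g := by
    ext f
    set f' := (Λ[n+2, i] : SSet.{u}).map g f with hf'
    have hmap : objEquiv f'.1 = g.unop ≫ objEquiv f.1 := by
      show objEquiv ((Δ[n+2] : SSet.{u}).map g f.1) = _
      rw [stdSimplex.map_apply, Equiv.apply_symm_apply]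
    have h1 : ∀ a, (g.unop ≫ objEquiv f.1).toOrderHom a ≠ pick f := fun a =>
      pick_missing f _
    have h2 : ∀ a, (g.unop ≫ objEquiv f.1).toOrderHom a ≠ pick f' := by
      intro a
      have := pick_missing f' a
      rwa [hmap] at this
    have key : S.map (fac (g.unop ≫ objEquiv f.1) (pick f')).op (D.F (pick f') (pick_ne f'))
        = S.map (fac (g.unop ≫ objEquiv f.1) (pick f)).op (D.F (pick f) (pick_ne f)) :=
      fac_eq D _ (pick_ne f') (pick_ne f) h2 h1
    show S.map (fac (objEquiv f'.1) (pick f')).op (D.F (pick f') (pick_ne f'))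
      = S.map g (S.map (fac (objEquiv f.1) (pick f)).op (D.F (pick f) (pick_ne f)))
    rw [hmap, key, fac_comp, op_comp, FunctorToTypes.map_comp_apply]
    rfl

lemma hornHom_face (D : FaceData S n i) (j : Fin (n+3)) (h : j ≠ i) :
    (hornHom D).app (op ⦋n+1⦌) (SSet.horn.face i j h) = D.F j h := by
  have hjf : ∀ a, (SimplexCategory.δ j).toOrderHom a ≠ j := by
    intro a
    show j.succAbove a ≠ j
    exact Fin.succAbove_ne j a
  have pm : ∀ a, (SimplexCategory.δ j).toOrderHom a ≠ pick (SSet.horn.face i j h) :=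
    pick_missing (SSet.horn.face i j h)
  have hfac : fac (SimplexCategory.δ j) j = 𝟙 _ := by
    apply δ_cancel j
    rw [fac_spec _ j hjf, Category.id_comp]
  calc (hornHom D).app (op ⦋n+1⦌) (SSet.horn.face i j h)
      = S.map (fac (SimplexCategory.δ j) (pick (SSet.horn.face i j h))).op
          (D.F _ (pick_ne _)) := by rfl
    _ = S.map (fac (SimplexCategory.δ j) j).op (D.F j h) :=
        fac_eq D _ (pick_ne _) h pm hjf
    _ = D.F j h := by rw [hfac, op_id, FunctorToTypes.map_id_apply]

theorem exists_filler [SSet.Quasicategory S] (D : FaceData S n i)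
    (h0 : 0 < i) (hn : i < Fin.last (n+2)) :
    ∃ ρ : S.obj (op ⦋n+2⦌), ∀ (j : Fin (n+3)) (h : j ≠ i),
      S.map (SimplexCategory.δ j).op ρ = D.F j h := by
  obtain ⟨g, hg⟩ := SSet.Quasicategory.hornFilling' (hornHom D) h0 hn
  set X : (Δ[n+2] : SSet.{u}).obj (op ⦋n+2⦌) :=
    objEquiv.symm (𝟙 (⦋n+2⦌ : SimplexCategory)) with hX
  refine ⟨g.app (op ⦋n+2⦌) X, ?_⟩
  intro j h
  have nat := ConcreteCategory.congr_hom (g.naturality (SimplexCategory.δ j).op) X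
  have hmap : (Δ[n+2] : SSet.{u}).map (SimplexCategory.δ j).op X
      = objEquiv.symm (SimplexCategory.δ j) := by
    rw [hX, stdSimplex.map_apply, Equiv.apply_symm_apply]
    rfl
  have hface := hornHom_face D j h
  rw [hg] at hface
  calc S.map (SimplexCategory.δ j).op (g.app (op ⦋n+2⦌) X)
      = g.app (op ⦋n+1⦌) ((Δ[n+2] : SSet.{u}).map (SimplexCategory.δ j).op X) := nat.symm
    _ = g.app (op ⦋n+1⦌) (objEquiv.symm (SimplexCategory.δ j)) :=
        congrArg (g.app (op ⦋n+1⦌)) hmap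
    _ = D.F j h := hface

end HornFiller


section HtpyDev

open CategoryTheory Simplicial Opposite HoCat HornFiller

variable {S : SSet.{u}}

namespace HtpyDev

/-! ### Elementwise simplicial identities -/

lemma dd {n : ℕ} (i j : Fin (n+2)) (H : i ≤ j) (a : Simp S (n+2)) :
    δ S i (δ S j.succ a) = δ S j (δ S i.castSucc a) :=
  ConcreteCategory.congr_hom (SimplicialObject.δ_comp_δ (X := S) H) a

lemma ds_self {n : ℕ} (i : Fin (n+1)) (x : Simp S n) :
    δ S i.castSucc (σ S i x) = x :=
  ConcreteCategory.congr_hom (SimplicialObject.δ_comp_σ_self (X := S)) x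

lemma ds_succ {n : ℕ} (i : Fin (n+1)) (x : Simp S n) :
    δ S i.succ (σ S i x) = x :=
  ConcreteCategory.congr_hom (SimplicialObject.δ_comp_σ_succ (X := S)) x

lemma ds_gt {n : ℕ} (i : Fin (n+2)) (j : Fin (n+1)) (H : j.castSucc < i) (x : Simp S (n+1)) :
    δ S i.succ (σ S j.castSucc x) = σ S j (δ S i x) :=
  ConcreteCategory.congr_hom (SimplicialObject.δ_comp_σ_of_gt (X := S) H) x

lemma ds_le {n : ℕ} (i : Fin (n+2)) (j : Fin (n+1)) (H : i ≤ j.castSucc) (x : Simp S (n+1)) :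
    δ S i.castSucc (σ S j.succ x) = σ S j (δ S i x) :=
  ConcreteCategory.congr_hom (SimplicialObject.δ_comp_σ_of_le (X := S) H) x

-- vertices of a degenerate edge
lemma A1 (x : Simp S 0) : δ S 0 (σ S 0 x) = x := ds_self 0 x
lemma A2 (x : Simp S 0) : δ S 1 (σ S 0 x) = x := ds_succ 0 x

-- faces of `σ₀ e` for an edge `e`
lemma B0 (e : Simp S 1) : δ S 0 (σ S 0 e) = e := ds_self 0 e
lemma B1 (e : Simp S 1) : δ S 1 (σ S 0 e) = e := ds_succ 0 e
lemma B2 (e : Simp S 1) : δ S 2 (σ S 0 e) = σ S 0 (δ S 1 e) :=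
  ds_gt 1 0 (by decide) e

-- faces of `σ₁ e` for an edge `e`
lemma C0 (e : Simp S 1) : δ S 0 (σ S 1 e) = σ S 0 (δ S 0 e) :=
  ds_le 0 0 (by decide) e
lemma C1 (e : Simp S 1) : δ S 1 (σ S 1 e) = e := ds_self 1 e
lemma C2 (e : Simp S 1) : δ S 2 (σ S 1 e) = e := ds_succ 1 e

-- double faces of a 2-simplex
lemma D1 (τ : Simp S 2) : δ S 1 (δ S 2 τ) = δ S 1 (δ S 1 τ) :=
  dd 1 1 (le_refl _) τ
lemma D2 (τ : Simp S 2) : δ S 0 (δ S 1 τ) = δ S 0 (δ S 0 τ) :=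
  dd 0 0 (le_refl _) τ
lemma D3 (τ : Simp S 2) : δ S 0 (δ S 2 τ) = δ S 1 (δ S 0 τ) :=
  dd 0 1 (by decide) τ

-- double faces of a 3-simplex
lemma E1 (ρ : Simp S 3) : δ S 2 (δ S 1 ρ) = δ S 1 (δ S 3 ρ) :=
  (dd 1 2 (by decide) ρ).symm
lemma E2 (ρ : Simp S 3) : δ S 1 (δ S 1 ρ) = δ S 1 (δ S 2 ρ) :=
  (dd 1 1 (le_refl _) ρ).symm
lemma E3 (ρ : Simp S 3) : δ S 0 (δ S 1 ρ) = δ S 0 (δ S 0 ρ) :=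
  dd 0 0 (le_refl _) ρ
lemma E4 (ρ : Simp S 3) : δ S 0 (δ S 2 ρ) = δ S 1 (δ S 0 ρ) :=
  dd 0 1 (by decide) ρ
lemma E5 (ρ : Simp S 3) : δ S 2 (δ S 3 ρ) = δ S 2 (δ S 2 ρ) :=
  dd 2 2 (le_refl _) ρ

/-! ### Horn fillers in low dimensions -/

lemma filler2 [SSet.Quasicategory S] (e f : Simp S 1) (h : δ S 0 e = δ S 1 f) :
    ∃ τ : Simp S 2, δ S 2 τ = e ∧ δ S 0 τ = f := by
  obtain ⟨ρ, hρ⟩ := exists_filler (S := S) (n := 0) (i := 1)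
    { F := fun j _ => if j = 0 then f else e
      compat := by
        intro j k hj hk hjk
        fin_cases j <;> fin_cases k <;>
          first
            | exact absurd hjk (by decide)
            | exact absurd rfl hj
            | exact absurd rfl hk
            | exact h }
    (by decide) (by decide)
  exact ⟨ρ, hρ 2 (by decide), hρ 0 (by decide)⟩

lemma filler31 [SSet.Quasicategory S] (F0 F2 F3 : Simp S 2)
    (c02 : δ S 0 F2 = δ S 1 F0) (c03 : δ S 0 F3 = δ S 2 F0) (c23 : δ S 2 F3 = δ S 2 F2) :
    ∃ ρ : Simp S 3, δ S 0 ρ = F0 ∧ δ S 2 ρ = F2 ∧ δ S 3 ρ = F3 := by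
  obtain ⟨ρ, hρ⟩ := exists_filler (S := S) (n := 1) (i := 1)
    { F := fun j _ => if j = 0 then F0 else if j = 2 then F2 else F3
      compat := by
        intro j k hj hk hjk
        fin_cases j <;> fin_cases k <;>
          first
            | exact absurd hjk (by decide)
            | exact absurd rfl hj
            | exact absurd rfl hk
            | exact c02
            | exact c03
            | exact c23 }
    (by decide) (by decide)
  exact ⟨ρ, hρ 0 (by decide), hρ 2 (by decide), hρ 3 (by decide)⟩

lemma filler32 [SSet.Quasicategory S] (F0 F1 F3 : Simp S 2)
    (c01 : δ S 0 F1 = δ S 0 F0) (c03 : δ S 0 F3 = δ S 2 F0) (c13 : δ S 1 F3 = δ S 2 F1) :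
    ∃ ρ : Simp S 3, δ S 0 ρ = F0 ∧ δ S 1 ρ = F1 ∧ δ S 3 ρ = F3 := by
  obtain ⟨ρ, hρ⟩ := exists_filler (S := S) (n := 1) (i := 2)
    { F := fun j _ => if j = 0 then F0 else if j = 1 then F1 else F3
      compat := by
        intro j k hj hk hjk
        fin_cases j <;> fin_cases k <;>
          first
            | exact absurd hjk (by decide)
            | exact absurd rfl hj
            | exact absurd rfl hk
            | exact c01
            | exact c03
            | exact c13 }
    (by decide) (by decide)
  exact ⟨ρ, hρ 0 (by decide), hρ 1 (by decide), hρ 3 (by decide)⟩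

/-! ### The homotopy relation -/

/-- Two edges from `x` to `y` are homotopic. -/
def Htpy {x y : Simp S 0} (e e' : HoEdge S x y) : Prop :=
  ∃ τ : Simp S 2, δ S 2 τ = e.1 ∧ δ S 1 τ = e'.1 ∧ δ S 0 τ = σ S 0 y

lemma htpy_refl {x y : Simp S 0} (e : HoEdge S x y) : Htpy e e :=
  ⟨σ S 1 e.1, C2 e.1, C1 e.1, by rw [C0, e.2.2]⟩

variable [SSet.Quasicategory S]

lemma htpy_euclid {x y : Simp S 0} {e e' e'' : HoEdge S x y}
    (h1 : Htpy e e') (h2 : Htpy e e'') : Htpy e' e'' := by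
  obtain ⟨τ1, hτ1₂, hτ1₁, hτ1₀⟩ := h1
  obtain ⟨τ2, hτ2₂, hτ2₁, hτ2₀⟩ := h2
  obtain ⟨ρ, h0, h2', h3⟩ := filler31 (σ S 0 (σ S 0 y)) τ2 τ1
    (by rw [hτ2₀, B1]) (by rw [hτ1₀, B2, A2]) (by rw [hτ1₂, hτ2₂])
  refine ⟨δ S 1 ρ, ?_, ?_, ?_⟩
  · rw [E1, h3, hτ1₁]
  · rw [E2, h2', hτ2₁]
  · rw [E3, h0, B0]

lemma htpy_symm {x y : Simp S 0} {e e' : HoEdge S x y} (h : Htpy e e') : Htpy e' e :=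
  htpy_euclid h (htpy_refl e)

lemma htpy_trans {x y : Simp S 0} {e e' e'' : HoEdge S x y}
    (h1 : Htpy e e') (h2 : Htpy e' e'') : Htpy e e'' :=
  htpy_euclid (htpy_symm h1) h2

lemma htpy_equivalence (x y : Simp S 0) : Equivalence (Htpy (S := S) (x := x) (y := y)) :=
  ⟨htpy_refl, htpy_symm, htpy_trans⟩

/-! ### Composition of edges -/

/-- `g` is a composite of `e` and `f`. -/
def IsComp {x y z : Simp S 0} (e : HoEdge S x y) (f : HoEdge S y z) (g : HoEdge S x z) : Prop :=
  ∃ τ : Simp S 2, δ S 2 τ = e.1 ∧ δ S 0 τ = f.1 ∧ δ S 1 τ = g.1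

/-- The identity edge at a vertex. -/
def idEdge (x : Simp S 0) : HoEdge S x x := ⟨σ S 0 x, A2 x, A1 x⟩

lemma comp_exists {x y z : Simp S 0} (e : HoEdge S x y) (f : HoEdge S y z) :
    ∃ g : HoEdge S x z, IsComp e f g := by
  obtain ⟨τ, hτ2, hτ0⟩ := filler2 e.1 f.1 (by rw [e.2.2, f.2.1])
  exact ⟨⟨δ S 1 τ, by rw [← D1, hτ2, e.2.1], by rw [D2, hτ0, f.2.2]⟩, τ, hτ2, hτ0, rfl⟩

lemma comp_unique {x y z : Simp S 0} {e : HoEdge S x y} {f : HoEdge S y z}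
    {g g' : HoEdge S x z} (h : IsComp e f g) (h' : IsComp e f g') : Htpy g g' := by
  obtain ⟨τ, hτ2, hτ0, hτ1⟩ := h
  obtain ⟨τ', hτ2', hτ0', hτ1'⟩ := h'
  obtain ⟨ρ, h0, h2', h3⟩ := filler31 (σ S 1 f.1) τ' τ
    (by rw [hτ0', C1]) (by rw [hτ0, C2]) (by rw [hτ2, hτ2'])
  refine ⟨δ S 1 ρ, ?_, ?_, ?_⟩
  · rw [E1, h3, hτ1]
  · rw [E2, h2', hτ1']
  · rw [E3, h0, C0, f.2.2]

lemma comp_left_htpy {x y z : Simp S 0} {e e' : HoEdge S x y} {f : HoEdge S y z}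
    {g : HoEdge S x z} (h : IsComp e f g) (he : Htpy e e') : IsComp e' f g := by
  obtain ⟨τ, hτ2, hτ0, hτ1⟩ := h
  obtain ⟨k, hk2, hk1, hk0⟩ := he
  obtain ⟨ρ, h0, h2', h3⟩ := filler31 (σ S 0 f.1) τ k
    (by rw [hτ0, B1]) (by rw [hk0, B2, f.2.1]) (by rw [hk2, hτ2])
  refine ⟨δ S 1 ρ, ?_, ?_, ?_⟩
  · rw [E1, h3, hk1]
  · rw [E3, h0, B0]
  · rw [E2, h2', hτ1]

lemma comp_right_htpy {x y z : Simp S 0} {e : HoEdge S x y} {f f' : HoEdge S y z}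
    {g : HoEdge S x z} (h : IsComp e f g) (hf : Htpy f f') : IsComp e f' g := by
  obtain ⟨τ, hτ2, hτ0, hτ1⟩ := h
  obtain ⟨k, hk2, hk1, hk0⟩ := hf
  obtain ⟨ρ, h0, h1, h3⟩ := filler32 k (σ S 1 g.1) τ
    (by rw [C0, g.2.2, hk0]) (by rw [hτ0, hk2]) (by rw [hτ1, C2])
  refine ⟨δ S 2 ρ, ?_, ?_, ?_⟩
  · rw [← E5, h3, hτ2]
  · rw [E4, h0, hk1]
  · rw [← E2, h1, C1]
  
lemma comp_assoc {w x y z : Simp S 0} {e : HoEdge S w x} {f : HoEdge S x y}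
    {h : HoEdge S y z} {g : HoEdge S w y} {k : HoEdge S x z} {m : HoEdge S w z}
    (h1 : IsComp e f g) (h2 : IsComp g h m) (h3 : IsComp f h k) : IsComp e k m := by
  obtain ⟨τ1, hτ1₂, hτ1₀, hτ1₁⟩ := h1
  obtain ⟨τ2, hτ2₂, hτ2₀, hτ2₁⟩ := h2
  obtain ⟨τ3, hτ3₂, hτ3₀, hτ3₁⟩ := h3
  obtain ⟨ρ, h0, h1', h3'⟩ := filler32 τ3 τ2 τ1
    (by rw [hτ2₀, hτ3₀]) (by rw [hτ1₀, hτ3₂]) (by rw [hτ1₁, hτ2₂])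
  refine ⟨δ S 2 ρ, ?_, ?_, ?_⟩
  · rw [← E5, h3', hτ1₂]
  · rw [E4, h0, hτ3₁]
  · rw [← E2, h1', hτ2₁]

lemma comp_id_left {x y : Simp S 0} (e : HoEdge S x y) : IsComp (idEdge x) e e :=
  ⟨σ S 0 e.1, by show δ S 2 (σ S 0 e.1) = σ S 0 x; rw [B2, e.2.1], B0 e.1, B1 e.1⟩

lemma comp_id_right {x y : Simp S 0} (e : HoEdge S x y) : IsComp e (idEdge y) e :=
  ⟨σ S 1 e.1, C2 e.1, by show δ S 0 (σ S 1 e.1) = σ S 0 y; rw [C0, e.2.2], C1 e.1⟩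

/-! ### The genuine homotopy category -/

variable (S) in
/-- Objects of the genuine homotopy category. -/
structure Obj : Type u where
  pt : Simp S 0

/-- A chosen composite of two edges. -/
noncomputable def compEdge {x y z : Simp S 0} (e : HoEdge S x y) (f : HoEdge S y z) :
    HoEdge S x z :=
  (comp_exists e f).choose

lemma compEdge_spec {x y z : Simp S 0} (e : HoEdge S x y) (f : HoEdge S y z) :
    IsComp e f (compEdge e f) :=
  (comp_exists e f).choose_spec

/-- Composition on homotopy classes of edges. -/
noncomputable def hcomp {x y z : Simp S 0}
    (p : Quot (Htpy (S := S) (x := x) (y := y)))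
    (q : Quot (Htpy (S := S) (x := y) (y := z))) :
    Quot (Htpy (S := S) (x := x) (y := z)) :=
  Quot.lift
    (fun e => Quot.lift (fun f => Quot.mk _ (compEdge e f))
      (fun f f' hff' => Quot.sound
        (comp_unique (comp_right_htpy (compEdge_spec e f) hff') (compEdge_spec e f'))))
    (fun e e' hee' => funext fun q => Quot.inductionOn q (fun f =>
      Quot.sound (comp_unique (comp_left_htpy (compEdge_spec e f) hee')
        (compEdge_spec e' f)))) p q

lemma hcomp_eq {x y z : Simp S 0} {e : HoEdge S x y} {f : HoEdge S y z}
    {g : HoEdge S x z} (h : IsComp e f g) :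
    hcomp (Quot.mk _ e) (Quot.mk _ f) = Quot.mk _ g :=
  Quot.sound (comp_unique (compEdge_spec e f) h)

noncomputable instance : Category (Obj S) where
  Hom a b := Quot (Htpy (S := S) (x := a.pt) (y := b.pt))
  id a := Quot.mk _ (idEdge a.pt)
  comp p q := hcomp p q
  id_comp p := Quot.inductionOn p (fun e => by
    exact hcomp_eq (comp_id_left e))
  comp_id p := Quot.inductionOn p (fun e => by
    exact hcomp_eq (comp_id_right e))
  assoc p q r := Quot.inductionOn p (fun e => Quot.inductionOn q (fun f =>
    Quot.inductionOn r (fun h => by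
      show hcomp (hcomp (Quot.mk _ e) (Quot.mk _ f)) (Quot.mk _ h)
        = hcomp (Quot.mk _ e) (hcomp (Quot.mk _ f) (Quot.mk _ h))
      rw [hcomp_eq (compEdge_spec e f), hcomp_eq (compEdge_spec f h)]
      rw [hcomp_eq (compEdge_spec (compEdge e f) h)]
      exact (hcomp_eq (comp_assoc (compEdge_spec e f) (compEdge_spec (compEdge e f) h)
        (compEdge_spec f h))).symm)))

/-- The comparison prefunctor. -/
noncomputable def cmp : Prefunctor (HoVert S) (Obj S) where
  obj v := ⟨v⟩
  map {a b} e := Quot.mk _ (e : HoEdge S a b)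

/-- The comparison functor from the free category. -/
noncomputable def cmpF : Paths (HoVert S) ⥤ Obj S := Paths.lift (cmp (S := S))

lemma cmpF_respects : ∀ (a b : Paths (HoVert S)) (f₁ f₂ : a ⟶ b),
    HoRel S f₁ f₂ → (cmpF (S := S)).map f₁ = (cmpF (S := S)).map f₂ := by
  intro a b f₁ f₂ h
  cases h with
  | triangle τ x y z e01 e12 e02 h2 h0 h1 =>
    rw [Functor.map_comp]
    have m1 : (cmpF (S := S)).map ((Paths.of (HoVert S)).map (edgeArrow e01)) = Quot.mk _ e01 :=
      Paths.lift_toPath _ _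
    have m2 : (cmpF (S := S)).map ((Paths.of (HoVert S)).map (edgeArrow e12)) = Quot.mk _ e12 :=
      Paths.lift_toPath _ _
    have m3 : (cmpF (S := S)).map ((Paths.of (HoVert S)).map (edgeArrow e02)) = Quot.mk _ e02 :=
      Paths.lift_toPath _ _
    rw [m1, m2, m3]
    exact hcomp_eq ⟨τ, h2.symm, h0.symm, h1.symm⟩
  | degenerate x e he =>
    have m1 : (cmpF (S := S)).map ((Paths.of (HoVert S)).map (edgeArrow e)) = Quot.mk _ e :=
      Paths.lift_toPath _ _
    rw [m1, CategoryTheory.Functor.map_id]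
    show Quot.mk _ e = Quot.mk _ (idEdge x)
    exact congrArg (Quot.mk _) (Subtype.ext he)

/-- The comparison functor from `Ho S`. -/
noncomputable def cmpQ : Ho S ⥤ Obj S :=
  CategoryTheory.Quotient.lift (HoRel S) (cmpF (S := S)) cmpF_respects

end HtpyDev

end HtpyDev

section MainProof

open CategoryTheory HoCat HtpyDev

/-- For a quasicategory `S`: (a) every morphism of the homotopy category `Ho S` between
(the classes of) vertices `x` and `y` is the class of a `1`-simplex `e` with `δ₁ e = x` and
`δ₀ e = y`; and (b) if two `1`-simplices `e, e'` from `x` to `y` induce the same morphism of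
`Ho S`, then there is a `2`-simplex `τ` with `δ₂ τ = e`, `δ₁ τ = e'` and `δ₀ τ = σ₀ y`,
i.e. `e` and `e'` are homotopic. -/
theorem quasicategory_hoCat_hom_repr (S : SSet.{u}) [SSet.Quasicategory S] :
    (∀ (x y : Simp S 0)
      (φ : (Quotient.functor (HoRel S)).obj ((Paths.of (HoVert S)).obj (vert S x)) ⟶
        (Quotient.functor (HoRel S)).obj ((Paths.of (HoVert S)).obj (vert S y))),
      ∃ (e : Simp S 1) (h₁ : δ S 1 e = x) (h₀ : δ S 0 e = y), homOfEdge e h₁ h₀ = φ) ∧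
    (∀ (x y : Simp S 0) (e e' : Simp S 1)
      (h₁ : δ S 1 e = x) (h₀ : δ S 0 e = y) (h₁' : δ S 1 e' = x) (h₀' : δ S 0 e' = y),
      homOfEdge e h₁ h₀ = homOfEdge e' h₁' h₀' →
      ∃ τ : Simp S 2, δ S 2 τ = e ∧ δ S 1 τ = e' ∧ δ S 0 τ = σ S 0 y) := by
  constructor
  · intro x y φ
    obtain ⟨p, rfl⟩ := (Quotient.functor (HoRel S)).map_surjective φ
    have key : ∀ (b : Paths (HoVert S)) (p : (Paths.of (HoVert S)).obj (vert S x) ⟶ b),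
        ∃ (e : Simp S 1) (h₁ : δ S 1 e = x) (h₀ : δ S 0 e = b),
          (Quotient.functor (HoRel S)).map
            ((Paths.of (HoVert S)).map (edgeArrow (⟨e, h₁, h₀⟩ : HoEdge S x b))) =
          (Quotient.functor (HoRel S)).map p := by
      intro b p
      change Quiver.Path (vert S x) b at p
      induction p with
      | nil =>
        refine ⟨σ S 0 x, A2 x, A1 x, ?_⟩
        exact CategoryTheory.Quotient.sound (HoRel S)
          (HoRel.degenerate x ⟨σ S 0 x, A2 x, A1 x⟩ rfl)
      | @cons c bb p' f ih =>
        obtain ⟨g, hg1, hg0, hgp⟩ := ih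
        obtain ⟨fe, hf1, hf0⟩ := f
        obtain ⟨τ, hτ2, hτ0⟩ := filler2 g fe (by rw [hg0, hf1])
        have h₁ : δ S 1 (δ S 1 τ) = x := by rw [← D1, hτ2, hg1]
        have h₀ : δ S 0 (δ S 1 τ) = bb := by rw [D2, hτ0, hf0]
        refine ⟨δ S 1 τ, h₁, h₀, ?_⟩
        have rel := CategoryTheory.Quotient.sound (HoRel S)
          (HoRel.triangle τ x c bb ⟨g, hg1, hg0⟩ ⟨fe, hf1, hf0⟩ ⟨δ S 1 τ, h₁, h₀⟩
            hτ2.symm hτ0.symm rfl)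
        rw [← rel, Functor.map_comp, hgp]
        exact ((Quotient.functor (HoRel S)).map_comp _ _).symm
    exact key ((Paths.of (HoVert S)).obj (vert S y)) p
  · intro x y e e' h₁ h₀ h₁' h₀' h
    have hG := congrArg (cmpQ (S := S)).map h
    have hu : ∀ (a : Simp S 1) (u₁ : δ S 1 a = x) (u₀ : δ S 0 a = y),
        (cmpQ (S := S)).map (homOfEdge a u₁ u₀) = Quot.mk _ (⟨a, u₁, u₀⟩ : HoEdge S x y) := by
      intro a u₁ u₀
      have h1 : (cmpQ (S := S)).map (homOfEdge a u₁ u₀)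
          = (cmpF (S := S)).map ((Paths.of (HoVert S)).map (edgeArrow (⟨a, u₁, u₀⟩ : HoEdge S x y))) :=
        CategoryTheory.Quotient.lift_map_functor_map _ _ _ _
      rw [h1]
      exact Paths.lift_toPath _ _
    rw [hu e h₁ h₀, hu e' h₁' h₀'] at hG
    have htp : Htpy (⟨e, h₁, h₀⟩ : HoEdge S x y) ⟨e', h₁', h₀'⟩ :=
      ((htpy_equivalence x y).eqvGen_iff).mp (Quot.eq.mp hG)
    obtain ⟨τ, ht2, ht1, ht0⟩ := htp
    exact ⟨τ, ht2, ht1, ht0⟩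

end MainProof
end

section
/- Let m and m′ be zigzag words of lengths p and q respectively. In the category Cat of (small) categories, the square whose top-left corner is the terminal category pt, whose top map pt ⥤ Z(m′) picks out the vertex 0 of Z(m′), whose left map pt ⥤ Z(m) picks out the vertex p of Z(m), whose right map is the inclusion ι′ : Z(m′) ⥤ Z(m ++ m′) (induced by the vertex map k ↦ p + k), and whose bottom map is the inclusion ι : Z(m) ⥤ Z(m ++ m′) (induced by the vertex map k ↦ k), is a pushout square (CategoryTheory.IsPushout). That is, the zigzag category of a concatenation of zigzag words is the pushout of the two zigzag categories glued along the common endpoint. -/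
open CategoryTheory

/-- The two symbols of which zigzag words are composed: `A` ("any arbitrary arrow") and
`W` ("backward weak equivalence"). -/
inductive ZigSym : Type
  | A : ZigSym
  | W : ZigSym
  deriving DecidableEq

/-- A zigzag word is a list of symbols. -/
abbrev ZigzagWord : Type := List ZigSym

/-- The vertices of the zigzag quiver of a word `m`: `0, 1, …, m.length`. -/
def ZigVert (m : ZigzagWord) : Type := Fin (m.length + 1)

/-- A vertex of the zigzag quiver. -/
def ZigVert.mk (m : ZigzagWord) (k : Fin (m.length + 1)) : ZigVert m := k

/-- The underlying natural number of a vertex. -/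
def ZigVert.toNat {m : ZigzagWord} (a : ZigVert m) : ℕ :=
  (show Fin (m.length + 1) from a).val

/-- There is exactly one arrow `(k-1) ⟶ k` for each `k` with `t k = A`, and exactly one
arrow `k ⟶ (k-1)` for each `k` with `t k = W` (in `1`-indexed notation). -/
def ZigHomP (m : ZigzagWord) (a b : ZigVert m) : Prop :=
  ∃ (k : ℕ) (hk : k < m.length),
    (m[k]'hk = ZigSym.A ∧ a.toNat = k ∧ b.toNat = k + 1) ∨
    (m[k]'hk = ZigSym.W ∧ a.toNat = k + 1 ∧ b.toNat = k)

instance (m : ZigzagWord) : Quiver.{0} (ZigVert m) :=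
  ⟨fun a b => PLift (ZigHomP m a b)⟩

/-- The zigzag category `Z(m)` of a zigzag word `m`: the free category on the zigzag
quiver of `m`. -/
abbrev ZigCat (m : ZigzagWord) : Type := Paths (ZigVert m)

/-- The vertex `0` (the source). -/
def zigSource (m : ZigzagWord) : ZigVert m := ZigVert.mk m 0

/-- The vertex `p = m.length` (the target). -/
def zigTarget (m : ZigzagWord) : ZigVert m := ZigVert.mk m (Fin.last m.length)

/-- The prefunctor `ZigVert m ⥤q ZigVert (m ++ m')` induced by the vertex map `k ↦ k`. -/
def zigIncl₁Prefunctor (m m' : ZigzagWord) : ZigVert m ⥤q ZigVert (m ++ m') where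
  obj a := ZigVert.mk _ ⟨a.toNat, by
    have : a.toNat < m.length + 1 := (show Fin (m.length + 1) from a).isLt
    simp only [List.length_append]
    omega⟩
  map {a b} e := PLift.up (by
    obtain ⟨k, hk, h⟩ := e.down
    refine ⟨k, by simp only [List.length_append]; omega, ?_⟩
    have hget : (m ++ m')[k]'(by simp only [List.length_append]; omega) = m[k]'hk :=
      List.getElem_append_left hk
    rcases h with ⟨hA, ha, hb⟩ | ⟨hW, ha, hb⟩
    · exact Or.inl ⟨hget.trans hA, by simpa [ZigVert.toNat, ZigVert.mk] using ha,
        by simpa [ZigVert.toNat, ZigVert.mk] using hb⟩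
    · exact Or.inr ⟨hget.trans hW, by simpa [ZigVert.toNat, ZigVert.mk] using ha,
        by simpa [ZigVert.toNat, ZigVert.mk] using hb⟩)

/-- The prefunctor `ZigVert m' ⥤q ZigVert (m ++ m')` induced by the vertex map
`k ↦ m.length + k`. -/
def zigIncl₂Prefunctor (m m' : ZigzagWord) : ZigVert m' ⥤q ZigVert (m ++ m') where
  obj a := ZigVert.mk _ ⟨m.length + a.toNat, by
    have : a.toNat < m'.length + 1 := (show Fin (m'.length + 1) from a).isLt
    simp only [List.length_append]
    omega⟩
  map {a b} e := PLift.up (by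
    obtain ⟨k, hk, h⟩ := e.down
    refine ⟨m.length + k, by simp only [List.length_append]; omega, ?_⟩
    have hget : (m ++ m')[m.length + k]'(by simp only [List.length_append]; omega) =
        m'[k]'hk := by
      have := List.getElem_append_right (as := m) (bs := m') (i := m.length + k)
        (Nat.le_add_right _ _) (h₂ := by simp only [List.length_append]; omega)
      simpa using this
    rcases h with ⟨hA, ha, hb⟩ | ⟨hW, ha, hb⟩
    · exact Or.inl ⟨hget.trans hA, by simp [ZigVert.toNat, ZigVert.mk] at ha ⊢; omega,
        by simp [ZigVert.toNat, ZigVert.mk] at hb ⊢; omega⟩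
    · exact Or.inr ⟨hget.trans hW, by simp [ZigVert.toNat, ZigVert.mk] at ha ⊢; omega,
        by simp [ZigVert.toNat, ZigVert.mk] at hb ⊢; omega⟩)

/-- The functor `ι : Z(m) ⥤ Z(m ++ m')` induced by the vertex map `k ↦ k`. -/
def zigIncl₁ (m m' : ZigzagWord) : ZigCat m ⥤ ZigCat (m ++ m') :=
  Paths.lift ((zigIncl₁Prefunctor m m').comp (Paths.of _))

/-- The functor `ι' : Z(m') ⥤ Z(m ++ m')` induced by the vertex map `k ↦ m.length + k`. -/
def zigIncl₂ (m m' : ZigzagWord) : ZigCat m' ⥤ ZigCat (m ++ m') :=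
  Paths.lift ((zigIncl₂Prefunctor m m').comp (Paths.of _))


section ZigPushoutAux

open CategoryTheory

variable (m m' : ZigzagWord)

lemma zigVert_toNat_lt (a : ZigVert (m ++ m')) : a.toNat < m.length + m'.length + 1 := by
  have h : a.toNat < (m ++ m').length + 1 := (show Fin ((m ++ m').length + 1) from a).isLt
  simpa [List.length_append] using h

lemma zigVert_ext {mm : ZigzagWord} {x y : ZigVert mm} (h : x.toNat = y.toNat) : x = y :=
  Fin.ext h

instance zigHom_subsingleton (mm : ZigzagWord) (a b : ZigVert mm) : Subsingleton (a ⟶ b) :=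
  ⟨fun e e' => by change PLift (ZigHomP mm a b) at e e'; cases e; cases e'; rfl⟩

lemma paths_map_toPath_congr {V : Type*} [Quiver.{1} V] [∀ a b : V, Subsingleton (a ⟶ b)]
    {C : Type*} [Category C] (n : Paths V ⥤ C) {a b a' b' : V}
    (ha : a = a') (hb : b = b') (e : a ⟶ b) (e' : a' ⟶ b') :
    n.map e.toPath = eqToHom (show n.obj a = n.obj a' by rw [ha]) ≫ n.map e'.toPath ≫
      eqToHom (show n.obj b' = n.obj b by rw [hb]) := by
  subst ha; subst hb
  obtain rfl : e = e' := Subsingleton.elim _ _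
  simp

/-- The vertex of `Z(m)` corresponding to a vertex of `Z(m ++ m')` lying in the left part. -/
def leftVert (a : ZigVert (m ++ m')) (ha : a.toNat ≤ m.length) : ZigVert m :=
  ZigVert.mk m ⟨a.toNat, by omega⟩

/-- The vertex of `Z(m')` corresponding to a vertex of `Z(m ++ m')` lying in the right part. -/
def rightVert (a : ZigVert (m ++ m')) : ZigVert m' :=
  ZigVert.mk m' ⟨a.toNat - m.length, by have := zigVert_toNat_lt m m' a; omega⟩

lemma zigHomP_toNat {mm : ZigzagWord} {a b : ZigVert mm} (e : ZigHomP mm a b) :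
    a.toNat + 1 = b.toNat ∨ b.toNat + 1 = a.toNat := by
  obtain ⟨k, hk, h⟩ := e
  rcases h with ⟨_, ha', hb'⟩ | ⟨_, ha', hb'⟩ <;> omega

lemma zigHomP_ge {a b : ZigVert (m ++ m')} (e : ZigHomP (m ++ m') a b)
    (hn : ¬(a.toNat ≤ m.length ∧ b.toNat ≤ m.length)) :
    m.length ≤ a.toNat ∧ m.length ≤ b.toNat := by
  obtain ⟨k, hk, h⟩ := e
  rcases h with ⟨_, ha', hb'⟩ | ⟨_, ha', hb'⟩ <;> omega

lemma zigHomP_restr₁ {a b : ZigVert (m ++ m')} (e : ZigHomP (m ++ m') a b)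
    (ha : a.toNat ≤ m.length) (hb : b.toNat ≤ m.length) :
    ZigHomP m (leftVert m m' a ha) (leftVert m m' b hb) := by
  obtain ⟨k, hk, h⟩ := e
  rcases h with ⟨hA, ha', hb'⟩ | ⟨hW, ha', hb'⟩
  · have hk' : k < m.length := by omega
    refine ⟨k, hk', Or.inl ⟨?_, ha', hb'⟩⟩
    rw [← List.getElem_append_left (bs := m') hk' (h' := hk)]
    exact hA
  · have hk' : k < m.length := by omega
    refine ⟨k, hk', Or.inr ⟨?_, ha', hb'⟩⟩
    rw [← List.getElem_append_left (bs := m') hk' (h' := hk)]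
    exact hW

lemma zigHomP_restr₂ {a b : ZigVert (m ++ m')} (e : ZigHomP (m ++ m') a b)
    (ha : m.length ≤ a.toNat) (hb : m.length ≤ b.toNat) :
    ZigHomP m' (rightVert m m' a) (rightVert m m' b) := by
  obtain ⟨k, hk, h⟩ := e
  have hk2 : k < m.length + m'.length := by simpa [List.length_append] using hk
  rcases h with ⟨hA, ha', hb'⟩ | ⟨hW, ha', hb'⟩
  · have hpk : m.length ≤ k := by omega
    refine ⟨k - m.length, by omega, Or.inl ⟨?_,
      by show a.toNat - m.length = k - m.length; omega,
      by show b.toNat - m.length = k - m.length + 1; omega⟩⟩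
    have hh := List.getElem_append_right (as := m) (bs := m') (i := k) hpk
      (h₂ := by omega)
    rw [← hh]
    exact hA
  · have hpk : m.length ≤ k := by omega
    refine ⟨k - m.length, by omega, Or.inr ⟨?_,
      by show a.toNat - m.length = k - m.length + 1; omega,
      by show b.toNat - m.length = k - m.length; omega⟩⟩
    have hh := List.getElem_append_right (as := m) (bs := m') (i := k) hpk
      (h₂ := by omega)
    rw [← hh]
    exact hW

variable {C : Type*} [Category C]

/-- Object part of the functor descending out of the pushout. -/
def descObj (F : ZigCat m' ⥤ C) (G : ZigCat m ⥤ C) (a : ZigVert (m ++ m')) : C :=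
  if ha : a.toNat ≤ m.length then G.obj (leftVert m m' a ha)
  else F.obj (rightVert m m' a)

lemma descObj_eq_G (F : ZigCat m' ⥤ C) (G : ZigCat m ⥤ C) (a : ZigVert (m ++ m'))
    (ha : a.toNat ≤ m.length) :
    descObj m m' F G a = G.obj (leftVert m m' a ha) :=
  dif_pos ha

lemma descObj_eq_F (F : ZigCat m' ⥤ C) (G : ZigCat m ⥤ C)
    (h : F.obj (zigSource m') = G.obj (zigTarget m)) (a : ZigVert (m ++ m'))
    (ha : m.length ≤ a.toNat) :
    descObj m m' F G a = F.obj (rightVert m m' a) := by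
  by_cases h' : a.toNat ≤ m.length
  · have h1 : a.toNat = m.length := le_antisymm h' ha
    have e1 : leftVert m m' a h' = zigTarget m := zigVert_ext (by
      show a.toNat = (Fin.last m.length).val
      simpa using h1)
    have e2 : rightVert m m' a = zigSource m' := zigVert_ext (by
      show a.toNat - m.length = ((0 : Fin (m'.length + 1))).val
      simp [h1])
    calc descObj m m' F G a = G.obj (leftVert m m' a h') := dif_pos h'
      _ = G.obj (zigTarget m) := by rw [e1]
      _ = F.obj (zigSource m') := h.symm
      _ = F.obj (rightVert m m' a) := by rw [e2]
  · exact dif_neg h'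

/-- Morphism part of the descending functor. -/
def descMap (F : ZigCat m' ⥤ C) (G : ZigCat m ⥤ C)
    (h : F.obj (zigSource m') = G.obj (zigTarget m))
    {a b : ZigVert (m ++ m')} (e : a ⟶ b) :
    descObj m m' F G a ⟶ descObj m m' F G b :=
  if hab : a.toNat ≤ m.length ∧ b.toNat ≤ m.length then
    eqToHom (descObj_eq_G m m' F G a hab.1) ≫
      G.map (Quiver.Hom.toPath (PLift.up (zigHomP_restr₁ m m' e.down hab.1 hab.2))) ≫
      eqToHom (descObj_eq_G m m' F G b hab.2).symm
  else
    eqToHom (descObj_eq_F m m' F G h a (zigHomP_ge m m' e.down hab).1) ≫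
      F.map (Quiver.Hom.toPath (PLift.up (zigHomP_restr₂ m m' e.down
        (zigHomP_ge m m' e.down hab).1 (zigHomP_ge m m' e.down hab).2))) ≫
      eqToHom (descObj_eq_F m m' F G h b (zigHomP_ge m m' e.down hab).2).symm

/-- The descending prefunctor. -/
def descPre (F : ZigCat m' ⥤ C) (G : ZigCat m ⥤ C)
    (h : F.obj (zigSource m') = G.obj (zigTarget m)) :
    ZigVert (m ++ m') ⥤q C where
  obj := descObj m m' F G
  map := descMap m m' F G h

/-- The descending functor out of `Z(m ++ m')`. -/
def descFun (F : ZigCat m' ⥤ C) (G : ZigCat m ⥤ C)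
    (h : F.obj (zigSource m') = G.obj (zigTarget m)) :
    ZigCat (m ++ m') ⥤ C :=
  Paths.lift (descPre m m' F G h)

end ZigPushoutAux

section ZigPushoutAux2

open CategoryTheory

variable (m m' : ZigzagWord)

lemma zigIncl₁_map_toPath {a b : ZigVert m} (e : a ⟶ b) :
    (zigIncl₁ m m').map e.toPath = ((zigIncl₁Prefunctor m m').map e).toPath :=
  Paths.lift_toPath _ _

lemma zigIncl₂_map_toPath {a b : ZigVert m'} (e : a ⟶ b) :
    (zigIncl₂ m m').map e.toPath = ((zigIncl₂Prefunctor m m').map e).toPath :=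
  Paths.lift_toPath _ _

variable {C : Type*} [Category C]

lemma descFun_map_toPath (F : ZigCat m' ⥤ C) (G : ZigCat m ⥤ C)
    (h : F.obj (zigSource m') = G.obj (zigTarget m))
    {a b : ZigVert (m ++ m')} (e : a ⟶ b) :
    (descFun m m' F G h).map e.toPath = descMap m m' F G h e :=
  Paths.lift_toPath _ _

lemma paths_map_toPath_eq {V : Type*} [Quiver.{1} V] [∀ a b : V, Subsingleton (a ⟶ b)]
    {D : Type*} [Category D] (n : Paths V ⥤ D) {a b a' b' : V} (ha : a = a') (hb : b = b')
    (e : a ⟶ b) (e' : a' ⟶ b') {X Y : D}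
    (p1 : X = n.obj a) (p2 : n.obj b = Y) (q1 : X = n.obj a') (q2 : n.obj b' = Y) :
    eqToHom p1 ≫ n.map e.toPath ≫ eqToHom p2 =
      eqToHom q1 ≫ n.map e'.toPath ≫ eqToHom q2 := by
  subst ha; subst hb
  obtain rfl : e = e' := Subsingleton.elim _ _
  subst p1; subst p2
  rfl

lemma zig_map_toPath_eq {mm : ZigzagWord} {D : Type*} [Category D] (n : ZigCat mm ⥤ D)
    {a b a' b' : ZigVert mm} (ha : a = a') (hb : b = b') (e : a ⟶ b) (e' : a' ⟶ b')
    {X Y : D} (p1 : X = n.obj ((Paths.of _).obj a)) (p2 : n.obj ((Paths.of _).obj b) = Y)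
    (q1 : X = n.obj ((Paths.of _).obj a')) (q2 : n.obj ((Paths.of _).obj b') = Y) :
    eqToHom p1 ≫ n.map e.toPath ≫ eqToHom p2 =
      eqToHom q1 ≫ n.map e'.toPath ≫ eqToHom q2 := by
  subst ha; subst hb
  obtain rfl : e = e' := Subsingleton.elim _ _
  subst p1; subst p2
  rfl

lemma zig_map_toPath_congr {mm : ZigzagWord} {D : Type*} [Category D] (n : ZigCat mm ⥤ D)
    {a b a' b' : ZigVert mm} (ha : a = a') (hb : b = b') (e : a ⟶ b) (e' : a' ⟶ b') :
    n.map e.toPath = eqToHom (show n.obj ((Paths.of _).obj a) = n.obj ((Paths.of _).obj a') by rw [ha]) ≫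
      n.map e'.toPath ≫
      eqToHom (show n.obj ((Paths.of _).obj b') = n.obj ((Paths.of _).obj b) by rw [hb]) := by
  subst ha; subst hb
  obtain rfl : e = e' := Subsingleton.elim _ _
  simp
  exact (Category.comp_id _).symm

lemma zig_ext_functor {mm : ZigzagWord} {D : Type*} [Category D] {F G : ZigCat mm ⥤ D}
    (h_obj : ∀ a : ZigVert mm, F.obj ((Paths.of _).obj a) = G.obj ((Paths.of _).obj a))
    (h : ∀ (a b : ZigVert mm) (e : a ⟶ b), F.map e.toPath =
      eqToHom (h_obj a) ≫ G.map e.toPath ≫ eqToHom (h_obj b).symm) : F = G :=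
  Paths.ext_functor (funext h_obj) h

lemma eqToHom_sandwich₁ {D : Type*} [Category D] {X A B Y Z W : D} (f : A ⟶ B)
    (p1 : X = A) (p2 : B = Y) (q1 : X = Z) (q2 : Z = A) (q3 : B = W) (q4 : W = Y) :
    eqToHom p1 ≫ f ≫ eqToHom p2 = eqToHom q1 ≫ (eqToHom q2 ≫ f ≫ eqToHom q3) ≫ eqToHom q4 := by
  subst_vars; simp

lemma eqToHom_sandwich₂ {D : Type*} [Category D] {X A B Y Z W Z' W' : D} (f : A ⟶ B)
    (p1 : X = Z') (p2 : Z' = A) (p3 : B = W') (p4 : W' = Y)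
    (q1 : X = Z) (q2 : Z = A) (q3 : B = W) (q4 : W = Y) :
    eqToHom p1 ≫ (eqToHom p2 ≫ f ≫ eqToHom p3) ≫ eqToHom p4 =
      eqToHom q1 ≫ (eqToHom q2 ≫ f ≫ eqToHom q3) ≫ eqToHom q4 := by
  subst_vars; simp

end ZigPushoutAux2

/-- The zigzag category of a concatenation of zigzag words is the pushout, in the category
`Cat` of categories, of the two zigzag categories glued along the common endpoint: the square
whose top map picks out the vertex `0` of `Z(m')`, whose left map picks out the vertex
`p = m.length` of `Z(m)`, whose right map is `ι' : Z(m') ⥤ Z(m ++ m')` and whose bottom map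
is `ι : Z(m) ⥤ Z(m ++ m')`, is a pushout square. -/
theorem zigCat_concat_isPushout (m m' : ZigzagWord) :
    IsPushout
      (Z := Cat.of (Discrete PUnit)) (X := Cat.of (ZigCat m')) (Y := Cat.of (ZigCat m))
      (P := Cat.of (ZigCat (m ++ m')))
      ((Functor.const (Discrete PUnit)).obj ((Paths.of _).obj (zigSource m'))).toCatHom
      ((Functor.const (Discrete PUnit)).obj ((Paths.of _).obj (zigTarget m))).toCatHom
      (zigIncl₂ m m').toCatHom (zigIncl₁ m m').toCatHom := by
  have hobj : (zigIncl₂ m m').obj ((Paths.of _).obj (zigSource m')) =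
      (zigIncl₁ m m').obj ((Paths.of _).obj (zigTarget m)) :=
    zigVert_ext (by
      show m.length + ((0 : Fin (m'.length + 1))).val = (Fin.last m.length).val
      simp)
  have hsq : (Functor.const (Discrete PUnit)).obj ((Paths.of _).obj (zigSource m')) ⋙ zigIncl₂ m m' =
      (Functor.const (Discrete PUnit)).obj ((Paths.of _).obj (zigTarget m)) ⋙ zigIncl₁ m m' := by
    refine CategoryTheory.Functor.ext (fun X => hobj) (fun X Y f => ?_)
    change (zigIncl₂ m m').map (𝟙 ((Paths.of _).obj (zigSource m'))) =
      eqToHom _ ≫ (zigIncl₁ m m').map (𝟙 ((Paths.of _).obj (zigTarget m))) ≫ eqToHom _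
    rw [CategoryTheory.Functor.map_id, CategoryTheory.Functor.map_id, Category.id_comp, eqToHom_trans]
    exact (eqToHom_refl _ _).symm
  replace hsq : ((Functor.const (Discrete PUnit)).obj ((Paths.of _).obj (zigSource m'))).toCatHom ≫
      (zigIncl₂ m m').toCatHom =
      ((Functor.const (Discrete PUnit)).obj ((Paths.of _).obj (zigTarget m))).toCatHom ≫
      (zigIncl₁ m m').toCatHom := Cat.ext hsq
  refine IsPushout.of_isColimit' ⟨hsq⟩ ?_
  refine Limits.PushoutCocone.IsColimit.mk hsq
    (fun s => (descFun m m' s.inl.toFunctor s.inr.toFunctor (Functor.congr_obj (congrArg Cat.Hom.toFunctor s.condition) ⟨PUnit.unit⟩)).toCatHom)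
    (fun s => ?_) (fun s => ?_) (fun s n hn₁ hn₂ => ?_)
  · -- fac_left : zigIncl₂ ≫ desc = s.inl
    apply Cat.ext
    have key : ∀ (F : ZigCat m' ⥤ s.pt) (G : ZigCat m ⥤ s.pt)
        (h : F.obj (zigSource m') = G.obj (zigTarget m)),
        zigIncl₂ m m' ⋙ descFun m m' F G h = F := by
      intro F G h
      refine zig_ext_functor (fun a => ?_) (fun a b e => ?_)
      · exact (descObj_eq_F m m' F G h
          ((zigIncl₂Prefunctor m m').obj a) (Nat.le_add_right _ _)).trans
          (congrArg F.obj (zigVert_ext (by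
            show m.length + a.toNat - m.length = a.toNat
            omega)))
      · have hne : ¬(((zigIncl₂Prefunctor m m').obj a).toNat ≤ m.length ∧
            ((zigIncl₂Prefunctor m m').obj b).toNat ≤ m.length) := by
          intro hc
          have h1 : m.length + a.toNat ≤ m.length := hc.1
          have h2 : m.length + b.toNat ≤ m.length := hc.2
          have h3 := zigHomP_toNat e.down
          omega
        erw [Functor.comp_map, zigIncl₂_map_toPath, descFun_map_toPath]
        simp only [descMap]
        split
        · next hc => exact absurd hc hne
        · next hc =>
            exact zig_map_toPath_eq F
              (show rightVert m m' ((zigIncl₂Prefunctor m m').obj a) = a from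
                zigVert_ext (by show m.length + a.toNat - m.length = a.toNat; omega))
              (show rightVert m m' ((zigIncl₂Prefunctor m m').obj b) = b from
                zigVert_ext (by show m.length + b.toNat - m.length = b.toNat; omega))
              _ e _ _ _ _

    exact key _ _ _
  · -- fac_right : zigIncl₁ ≫ desc = s.inr
    apply Cat.ext
    have key : ∀ (F : ZigCat m' ⥤ s.pt) (G : ZigCat m ⥤ s.pt)
        (h : F.obj (zigSource m') = G.obj (zigTarget m)),
        zigIncl₁ m m' ⋙ descFun m m' F G h = G := by
      intro F G h
      refine zig_ext_functor (fun a => ?_) (fun a b e => ?_)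
      · exact descObj_eq_G m m' F G ((zigIncl₁Prefunctor m m').obj a)
          (by show a.toNat ≤ m.length
              have : a.toNat < m.length + 1 := (show Fin (m.length + 1) from a).isLt
              omega)
      · have hab : ((zigIncl₁Prefunctor m m').obj a).toNat ≤ m.length ∧
            ((zigIncl₁Prefunctor m m').obj b).toNat ≤ m.length := by
          constructor
          · show a.toNat ≤ m.length
            have : a.toNat < m.length + 1 := (show Fin (m.length + 1) from a).isLt
            omega
          · show b.toNat ≤ m.length
            have : b.toNat < m.length + 1 := (show Fin (m.length + 1) from b).isLt
            omega
        erw [Functor.comp_map, zigIncl₁_map_toPath, descFun_map_toPath]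
        simp only [descMap]
        split
        · next hc =>
            exact zig_map_toPath_eq G
              (show leftVert m m' ((zigIncl₁Prefunctor m m').obj a) hc.1 = a from rfl)
              (show leftVert m m' ((zigIncl₁Prefunctor m m').obj b) hc.2 = b from rfl)
              _ e _ _ _ _
        · next hc => exact absurd hab hc

    exact key _ _ _
  · -- uniqueness
    obtain ⟨n⟩ := n
    apply Cat.ext
    replace hn₁ := congrArg Cat.Hom.toFunctor hn₁
    replace hn₂ := congrArg Cat.Hom.toFunctor hn₂
    simp only [Cat.Hom.comp_toFunctor, Functor.toCatHom_toFunctor] at hn₁ hn₂ ⊢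
    have key : ∀ (F : ZigCat m' ⥤ s.pt) (G : ZigCat m ⥤ s.pt)
        (h : F.obj (zigSource m') = G.obj (zigTarget m)) (n : ZigCat (m ++ m') ⥤ s.pt)
        (hn₁ : zigIncl₂ m m' ⋙ n = F) (hn₂ : zigIncl₁ m m' ⋙ n = G),
        n = descFun m m' F G h := by
      intro F G h n hn₁ hn₂
      refine zig_ext_functor (fun a => ?_) (fun a b e => ?_)
      · by_cases ha : a.toNat ≤ m.length
        · have h1 : n.obj a = G.obj (leftVert m m' a ha) := by
            rw [← hn₂]; rfl
          exact h1.trans (descObj_eq_G m m' F G a ha).symm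
        · have hp : m.length ≤ a.toNat := le_of_not_ge ha
          have h1 : n.obj a = F.obj (rightVert m m' a) := by
            rw [← hn₁]
            exact congrArg n.obj (zigVert_ext (by
              show a.toNat = m.length + (a.toNat - m.length); omega))
          exact h1.trans (descObj_eq_F m m' F G
            h a hp).symm
      · by_cases hab : a.toNat ≤ m.length ∧ b.toNat ≤ m.length
        · have e' : leftVert m m' a hab.1 ⟶ leftVert m m' b hab.2 :=
            PLift.up (zigHomP_restr₁ m m' e.down hab.1 hab.2)
          have h3 : n.map e.toPath = n.map ((zigIncl₁ m m').map e'.toPath) := by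
            rw [zigIncl₁_map_toPath]
            exact congrArg n.map (congrArg (fun x : a ⟶ b => x.toPath)
              (Subsingleton.elim e ((zigIncl₁Prefunctor m m').map e')))
          have h5 := Functor.congr_hom hn₂ e'.toPath
          erw [Functor.comp_map] at h5
          erw [h3, h5, descFun_map_toPath]
          simp only [descMap]
          split
          · exact eqToHom_sandwich₁ _ _ _ _ _ _ _
          · next hc => exact absurd hab hc
        · have hge := zigHomP_ge m m' e.down hab
          have e' : rightVert m m' a ⟶ rightVert m m' b :=
            PLift.up (zigHomP_restr₂ m m' e.down hge.1 hge.2)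
          have h3 := zig_map_toPath_congr n
            (show a = (zigIncl₂Prefunctor m m').obj (rightVert m m' a) from
              zigVert_ext (show a.toNat = m.length + (a.toNat - m.length) by omega))
            (show b = (zigIncl₂Prefunctor m m').obj (rightVert m m' b) from
              zigVert_ext (show b.toNat = m.length + (b.toNat - m.length) by omega))
            e ((zigIncl₂Prefunctor m m').map e')
          have h4 : n.map (((zigIncl₂Prefunctor m m').map e').toPath) =
              n.map ((zigIncl₂ m m').map e'.toPath) := by
            rw [zigIncl₂_map_toPath]
            rfl
          have h5 := Functor.congr_hom hn₁ e'.toPath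
          erw [Functor.comp_map] at h5
          erw [h3, h4, h5, descFun_map_toPath]
          simp only [descMap]
          split
          · next hc => exact absurd hc hab
          · exact eqToHom_sandwich₂ _ _ _ _ _ _ _ _ _
    exact key _ _ _ n hn₁ hn₂
end

section
/- Let R be a category, W a multiplicative class of morphisms of R with associated wide subcategory 𝒲, and x, y objects of R. Let m and m′ be zigzag words of lengths p and q respectively. Then the square of categories and functors whose top-left corner is (m ++ m′)(x, y), whose top map (m ++ m′)(x, y) ⥤ Fun_t(m′, R; y) is restriction along ι′ : Z(m′) ⥤ Z(m ++ m′), whose left map (m ++ m′)(x, y) ⥤ Fun_s(m, R; x) is restriction along ι : Z(m) ⥤ Z(m ++ m′), whose right map Fun_t(m′, R; y) ⥤ 𝒲 is evaluation at the vertex 0 of Z(m′), and whose bottom map Fun_s(m, R; x) ⥤ 𝒲 is evaluation at the vertex p of Z(m), commutes and is a pullback square in the category Cat of categories (CategoryTheory.IsPullback). That is, the category of zigzags of concatenated type [m; m′] from x to y is the fiber product over 𝒲 of the two half-pointed zigzag categories. -/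
open CategoryTheory

universe v u

variable {R : Type u} [Category.{v} R]

/-- The generating arrow `e : a ⟶ b` is one of the backward ("weak equivalence") arrows
`k ⟶ (k-1)` corresponding to a letter `W` of the word `m`. -/
def IsWArrow (m : ZigzagWord) {a b : ZigVert m} (_ : a ⟶ b) : Prop :=
  ∃ (k : ℕ) (hk : k < m.length),
    m[k]'hk = ZigSym.W ∧ a.toNat = k + 1 ∧ b.toNat = k

/-- A functor `T : Z(m) ⥤ R` is a relative functor of type `m` if it sends each generating
arrow corresponding to a letter `W` of `m` to a morphism lying in `W`. -/
def IsRelFunctor (m : ZigzagWord) (W : MorphismProperty R) (T : ZigCat m ⥤ R) : Prop :=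
  ∀ ⦃a b : ZigVert m⦄ (e : a ⟶ b), IsWArrow m e → W (T.map ((Paths.of _).map e))

/-- The wide subcategory `𝒲` of `R` associated to a multiplicative class `W` of morphisms:
same objects, and morphisms those of `R` lying in `W`. -/
def WideSub (W : MorphismProperty R) : Type u := R

/-- An object of `R`, seen in the wide subcategory. -/
def WideSub.mk (W : MorphismProperty R) (r : R) : WideSub W := r

instance (W : MorphismProperty R) [W.IsMultiplicative] : Category.{v} (WideSub W) where
  Hom a b := { f : (show R from a) ⟶ (show R from b) // W f }
  id a := ⟨𝟙 _, W.id_mem _⟩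
  comp f g := ⟨f.1 ≫ g.1, W.comp_mem _ _ f.2 g.2⟩
  id_comp f := Subtype.ext (Category.id_comp f.1)
  comp_id f := Subtype.ext (Category.comp_id f.1)
  assoc f g h := Subtype.ext (Category.assoc f.1 g.1 h.1)

/-- The category `Fun_s(m, R; x)`: objects are the relative functors `T` of type `m` with
`T(0) = x`. -/
structure FunS (m : ZigzagWord) (W : MorphismProperty R) (x : R) : Type max u v where
  T : ZigCat m ⥤ R
  rel : IsRelFunctor m W T
  hx : T.obj ((Paths.of _).obj (zigSource m)) = x

/-- Morphisms of `Fun_s(m, R; x)`: natural transformations all of whose components lie in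
`W` and whose component at the vertex `0` is the identity of `x`. -/
structure FunS.Hom {m : ZigzagWord} {W : MorphismProperty R} {x : R}
    (X Y : FunS m W x) : Type v where
  η : X.T ⟶ Y.T
  mem : ∀ v : ZigCat m, W (η.app v)
  h₀ : η.app ((Paths.of _).obj (zigSource m)) = eqToHom (X.hx.trans Y.hx.symm)

theorem FunS.Hom.ext' {m : ZigzagWord} {W : MorphismProperty R} {x : R} {X Y : FunS m W x}
    {f g : FunS.Hom X Y} (h : f.η = g.η) : f = g := by
  cases f; cases g; cases h; rfl

instance {m : ZigzagWord} (W : MorphismProperty R) [W.IsMultiplicative] (x : R) :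
    Category.{v} (FunS m W x) where
  Hom X Y := FunS.Hom X Y
  id X := { η := 𝟙 X.T, mem := fun v => W.id_mem _, h₀ := by simp }
  comp f g :=
    { η := f.η ≫ g.η
      mem := fun v => W.comp_mem _ _ (f.mem v) (g.mem v)
      h₀ := by rw [NatTrans.comp_app, f.h₀, g.h₀, eqToHom_trans] }
  id_comp f := FunS.Hom.ext' (by simp)
  comp_id f := FunS.Hom.ext' (by simp)
  assoc f g h := FunS.Hom.ext' (by simp)

/-- The category `Fun_t(m, R; y)`: objects are the relative functors `T` of type `m` with
`T(p) = y`. -/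
structure FunT (m : ZigzagWord) (W : MorphismProperty R) (y : R) : Type max u v where
  T : ZigCat m ⥤ R
  rel : IsRelFunctor m W T
  hy : T.obj ((Paths.of _).obj (zigTarget m)) = y

/-- Morphisms of `Fun_t(m, R; y)`: natural transformations all of whose components lie in
`W` and whose component at the vertex `p` is the identity of `y`. -/
structure FunT.Hom {m : ZigzagWord} {W : MorphismProperty R} {y : R}
    (X Y : FunT m W y) : Type v where
  η : X.T ⟶ Y.T
  mem : ∀ v : ZigCat m, W (η.app v)
  hₚ : η.app ((Paths.of _).obj (zigTarget m)) = eqToHom (X.hy.trans Y.hy.symm)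

theorem FunT.Hom.ext' {m : ZigzagWord} {W : MorphismProperty R} {y : R} {X Y : FunT m W y}
    {f g : FunT.Hom X Y} (h : f.η = g.η) : f = g := by
  cases f; cases g; cases h; rfl

instance {m : ZigzagWord} (W : MorphismProperty R) [W.IsMultiplicative] (y : R) :
    Category.{v} (FunT m W y) where
  Hom X Y := FunT.Hom X Y
  id X := { η := 𝟙 X.T, mem := fun v => W.id_mem _, hₚ := by simp }
  comp f g :=
    { η := f.η ≫ g.η
      mem := fun v => W.comp_mem _ _ (f.mem v) (g.mem v)
      hₚ := by rw [NatTrans.comp_app, f.hₚ, g.hₚ, eqToHom_trans] }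
  id_comp f := FunT.Hom.ext' (by simp)
  comp_id f := FunT.Hom.ext' (by simp)
  assoc f g h := FunT.Hom.ext' (by simp)

/-- Evaluation at the vertex `p` on `Fun_s(m, R; x)`, as a functor to the wide
subcategory `𝒲`. -/
def evalTarget (m : ZigzagWord) (W : MorphismProperty R) [W.IsMultiplicative] (x : R) :
    FunS m W x ⥤ WideSub W where
  obj X := WideSub.mk W (X.T.obj ((Paths.of _).obj (zigTarget m)))
  map f := ⟨f.η.app ((Paths.of _).obj (zigTarget m)), f.mem _⟩
  map_id X := rfl
  map_comp f g := rfl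

/-- Evaluation at the vertex `0` on `Fun_t(m, R; y)`, as a functor to the wide
subcategory `𝒲`. -/
def evalSource (m : ZigzagWord) (W : MorphismProperty R) [W.IsMultiplicative] (y : R) :
    FunT m W y ⥤ WideSub W where
  obj X := WideSub.mk W (X.T.obj ((Paths.of _).obj (zigSource m)))
  map f := ⟨f.η.app ((Paths.of _).obj (zigSource m)), f.mem _⟩
  map_id X := rfl
  map_comp f g := rfl

/-- The category `m(x, y)` of zigzags of type `m` from `x` to `y`: objects are the relative
functors `T` of type `m` with `T(0) = x` and `T(p) = y`. -/
structure ZigBoth (m : ZigzagWord) (W : MorphismProperty R) (x y : R) : Type max u v where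
  T : ZigCat m ⥤ R
  rel : IsRelFunctor m W T
  hx : T.obj ((Paths.of _).obj (zigSource m)) = x
  hy : T.obj ((Paths.of _).obj (zigTarget m)) = y

/-- Morphisms of `m(x, y)`: natural transformations all of whose components lie in `W` and
whose components at the vertices `0` and `p` are the identities of `x` and `y`. -/
structure ZigBoth.Hom {m : ZigzagWord} {W : MorphismProperty R} {x y : R}
    (X Y : ZigBoth m W x y) : Type v where
  η : X.T ⟶ Y.T
  mem : ∀ v : ZigCat m, W (η.app v)
  h₀ : η.app ((Paths.of _).obj (zigSource m)) = eqToHom (X.hx.trans Y.hx.symm)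
  hₚ : η.app ((Paths.of _).obj (zigTarget m)) = eqToHom (X.hy.trans Y.hy.symm)

theorem ZigBoth.Hom.ext' {m : ZigzagWord} {W : MorphismProperty R} {x y : R}
    {X Y : ZigBoth m W x y} {f g : ZigBoth.Hom X Y} (h : f.η = g.η) : f = g := by
  cases f; cases g; cases h; rfl

instance {m : ZigzagWord} (W : MorphismProperty R) [W.IsMultiplicative] (x y : R) :
    Category.{v} (ZigBoth m W x y) where
  Hom X Y := ZigBoth.Hom X Y
  id X := { η := 𝟙 X.T, mem := fun v => W.id_mem _, h₀ := by simp, hₚ := by simp }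
  comp f g :=
    { η := f.η ≫ g.η
      mem := fun v => W.comp_mem _ _ (f.mem v) (g.mem v)
      h₀ := by rw [NatTrans.comp_app, f.h₀, g.h₀, eqToHom_trans]
      hₚ := by rw [NatTrans.comp_app, f.hₚ, g.hₚ, eqToHom_trans] }
  id_comp f := ZigBoth.Hom.ext' (by simp)
  comp_id f := ZigBoth.Hom.ext' (by simp)
  assoc f g h := ZigBoth.Hom.ext' (by simp)

/-- Auxiliary transport lemma for components of natural transformations. -/
theorem app_eq_eqToHom_of {C : Type*} {D : Type*} [Category C] [Category D]
    {F G : C ⥤ D} (η : F ⟶ G) {v w : C} (h : w = v)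
    (p : F.obj w = G.obj w) (happ : η.app w = eqToHom p)
    (q : F.obj v = G.obj v) : η.app v = eqToHom q := by
  subst h; exact happ

/-- Restriction along `ι : Z(m) ⥤ Z(m ++ m')`, as a functor
`(m ++ m')(x, y) ⥤ Fun_s(m, R; x)`. -/
def restrictLeft (W : MorphismProperty R) [W.IsMultiplicative] (x y : R)
    (m m' : ZigzagWord) : ZigBoth (m ++ m') W x y ⥤ FunS m W x where
  obj X :=
    { T := zigIncl₁ m m' ⋙ X.T
      rel := by
        intro a b e he
        obtain ⟨k, hk, hW, ha, hb⟩ := he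
        have hmap : (zigIncl₁ m m').map ((Paths.of _).map e) =
            (Paths.of _).map ((zigIncl₁Prefunctor m m').map e) := by
          exact Paths.lift_toPath _ _
        rw [Functor.comp_map, hmap]
        refine X.rel _ ⟨k, by simp only [List.length_append]; omega, ?_, ?_, ?_⟩
        · exact (List.getElem_append_left hk).trans hW
        · simpa [zigIncl₁Prefunctor, ZigVert.mk, ZigVert.toNat] using ha
        · simpa [zigIncl₁Prefunctor, ZigVert.mk, ZigVert.toNat] using hb
      hx := by
        have h : (zigIncl₁ m m').obj ((Paths.of _).obj (zigSource m)) =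
            (Paths.of _).obj (zigSource (m ++ m')) :=
          Fin.ext (by simp [zigSource, ZigVert.mk, ZigVert.toNat, zigIncl₁,
            zigIncl₁Prefunctor, Paths.lift, Paths.of]; rfl)
        show X.T.obj ((zigIncl₁ m m').obj ((Paths.of _).obj (zigSource m))) = x
        rw [h, X.hx] }
  map {X Y} f :=
    { η := Functor.whiskerLeft (zigIncl₁ m m') f.η
      mem := fun v => f.mem _
      h₀ := by
        have h : (zigIncl₁ m m').obj ((Paths.of _).obj (zigSource m)) =
            (Paths.of _).obj (zigSource (m ++ m')) :=
          Fin.ext (by simp [zigSource, ZigVert.mk, ZigVert.toNat, zigIncl₁,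
            zigIncl₁Prefunctor, Paths.lift, Paths.of]; rfl)
        exact app_eq_eqToHom_of f.η h.symm _ f.h₀ _ }
  map_id X := FunS.Hom.ext' rfl
  map_comp f g := FunS.Hom.ext' rfl

/-- Restriction along `ι' : Z(m') ⥤ Z(m ++ m')`, as a functor
`(m ++ m')(x, y) ⥤ Fun_t(m', R; y)`. -/
def restrictRight (W : MorphismProperty R) [W.IsMultiplicative] (x y : R)
    (m m' : ZigzagWord) : ZigBoth (m ++ m') W x y ⥤ FunT m' W y where
  obj X :=
    { T := zigIncl₂ m m' ⋙ X.T
      rel := by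
        intro a b e he
        obtain ⟨k, hk, hW, ha, hb⟩ := he
        have hmap : (zigIncl₂ m m').map ((Paths.of _).map e) =
            (Paths.of _).map ((zigIncl₂Prefunctor m m').map e) := by
          exact Paths.lift_toPath _ _
        rw [Functor.comp_map, hmap]
        refine X.rel _ ⟨m.length + k, by simp only [List.length_append]; omega, ?_, ?_, ?_⟩
        · refine Eq.trans ?_ hW
          have := List.getElem_append_right (as := m) (bs := m') (i := m.length + k)
            (Nat.le_add_right _ _) (h₂ := by simp only [List.length_append]; omega)
          simpa using this
        · simp only [zigIncl₂Prefunctor, ZigVert.mk, ZigVert.toNat] at ha ⊢; omega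
        · simp only [zigIncl₂Prefunctor, ZigVert.mk, ZigVert.toNat] at hb ⊢; omega
      hy := by
        have h : (zigIncl₂ m m').obj ((Paths.of _).obj (zigTarget m')) =
            (Paths.of _).obj (zigTarget (m ++ m')) :=
          Fin.ext (by simp [zigTarget, ZigVert.mk, ZigVert.toNat, zigIncl₂,
            zigIncl₂Prefunctor, Paths.lift, Paths.of, Fin.last, List.length_append]; rfl)
        show X.T.obj ((zigIncl₂ m m').obj ((Paths.of _).obj (zigTarget m'))) = y
        rw [h, X.hy] }
  map {X Y} f :=
    { η := Functor.whiskerLeft (zigIncl₂ m m') f.η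
      mem := fun v => f.mem _
      hₚ := by
        have h : (zigIncl₂ m m').obj ((Paths.of _).obj (zigTarget m')) =
            (Paths.of _).obj (zigTarget (m ++ m')) :=
          Fin.ext (by simp [zigTarget, ZigVert.mk, ZigVert.toNat, zigIncl₂,
            zigIncl₂Prefunctor, Paths.lift, Paths.of, Fin.last, List.length_append]; rfl)
        exact app_eq_eqToHom_of f.η h.symm _ f.hₚ _ }
  map_id X := FunT.Hom.ext' rfl
  map_comp f g := FunT.Hom.ext' rfl

section ZigGlueAux

open CategoryTheory

instance zigHomSubsingleton (m : ZigzagWord) (a b : ZigVert m) : Subsingleton (a ⟶ b) :=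
  show Subsingleton (PLift _) from inferInstance

theorem zigvert_lt {m m' : ZigzagWord} (v : ZigVert (m ++ m')) :
    v.toNat < m.length + m'.length + 1 := by
  have : v.toNat < (m ++ m').length + 1 := (show Fin _ from v).isLt
  simpa [List.length_append] using this

theorem zigvert_le {m : ZigzagWord} (v : ZigVert m) : v.toNat ≤ m.length :=
  Nat.lt_succ_iff.mp ((show Fin (m.length + 1) from v).isLt)

theorem of_map_eq {V : Type*} [Quiver.{0} V] {a b : V} (e : a ⟶ b) :
    (Paths.of _).map e = e.toPath := rfl

/-- The left restriction of a vertex. -/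
def vL {m m' : ZigzagWord} (v : ZigVert (m ++ m')) (h : v.toNat ≤ m.length) : ZigVert m :=
  ZigVert.mk m ⟨v.toNat, by omega⟩

/-- The right restriction of a vertex. -/
def vR {m m' : ZigzagWord} (v : ZigVert (m ++ m')) (_h : m.length ≤ v.toNat) : ZigVert m' :=
  ZigVert.mk m' ⟨v.toNat - m.length, by have := zigvert_lt v; omega⟩

theorem vL_toNat {m m' : ZigzagWord} (v : ZigVert (m ++ m')) (h : v.toNat ≤ m.length) :
    (vL v h).toNat = v.toNat := rfl

theorem vR_toNat {m m' : ZigzagWord} (v : ZigVert (m ++ m')) (h : m.length ≤ v.toNat) :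
    (vR v h).toNat = v.toNat - m.length := rfl

theorem src_toNat (m : ZigzagWord) : (zigSource m).toNat = 0 := by
  simp [zigSource, ZigVert.mk, ZigVert.toNat]

theorem tgt_toNat (m : ZigzagWord) : (zigTarget m).toNat = m.length := by
  simp [zigTarget, ZigVert.mk, ZigVert.toNat]

theorem zigvert_ext {m : ZigzagWord} {v w : ZigVert m} (h : v.toNat = w.toNat) : v = w :=
  Fin.ext h

theorem vL_src {m m' : ZigzagWord} (h : (zigSource (m ++ m')).toNat ≤ m.length) :
    vL (zigSource (m ++ m')) h = zigSource m :=
  zigvert_ext (by rw [vL_toNat, src_toNat, src_toNat])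

theorem vR_tgt {m m' : ZigzagWord} (h : m.length ≤ (zigTarget (m ++ m')).toNat) :
    vR (zigTarget (m ++ m')) h = zigTarget m' := by
  refine zigvert_ext ?_
  rw [vR_toNat, tgt_toNat, tgt_toNat]
  simp [List.length_append]

theorem vL_eq_tgt {m m' : ZigzagWord} {v : ZigVert (m ++ m')} (hv : v.toNat = m.length)
    (h : v.toNat ≤ m.length) : vL v h = zigTarget m :=
  zigvert_ext (by rw [vL_toNat, tgt_toNat, hv])

theorem vR_eq_src {m m' : ZigzagWord} {v : ZigVert (m ++ m')} (hv : v.toNat = m.length)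
    (h : m.length ≤ v.toNat) : vR v h = zigSource m' :=
  zigvert_ext (by rw [vR_toNat, src_toNat]; omega)

theorem incl₁_obj_eq {m m' : ZigzagWord} (v : ZigVert m)
    (h : ((zigIncl₁Prefunctor m m').obj v).toNat ≤ m.length) :
    vL ((zigIncl₁Prefunctor m m').obj v) h = v := rfl

theorem incl₁_obj_toNat {m m' : ZigzagWord} (v : ZigVert m) :
    ((zigIncl₁Prefunctor m m').obj v).toNat = v.toNat := rfl

theorem incl₂_obj_toNat {m m' : ZigzagWord} (v : ZigVert m') :
    ((zigIncl₂Prefunctor m m').obj v).toNat = m.length + v.toNat := rfl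

theorem vR_incl₂ {m m' : ZigzagWord} (v : ZigVert m')
    (h : m.length ≤ ((zigIncl₂Prefunctor m m').obj v).toNat) :
    vR ((zigIncl₂Prefunctor m m').obj v) h = v :=
  zigvert_ext (by rw [vR_toNat, incl₂_obj_toNat]; omega)

theorem incl₂_vR {m m' : ZigzagWord} (v : ZigVert (m ++ m')) (h : m.length ≤ v.toNat) :
    (zigIncl₂Prefunctor m m').obj (vR v h) = v :=
  zigvert_ext (by rw [incl₂_obj_toNat, vR_toNat]; omega)

theorem junction_eq (m m' : ZigzagWord) :
    (zigIncl₂Prefunctor m m').obj (zigSource m') = (zigIncl₁Prefunctor m m').obj (zigTarget m) :=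
  zigvert_ext (by rw [incl₂_obj_toNat, incl₁_obj_toNat, src_toNat, tgt_toNat]; omega)


/-- Each generating arrow lies entirely on one side. -/
theorem zig_side {m m' : ZigzagWord} {a b : ZigVert (m ++ m')} (e : a ⟶ b) :
    (a.toNat ≤ m.length ∧ b.toNat ≤ m.length) ∨ (m.length ≤ a.toNat ∧ m.length ≤ b.toNat) := by
  obtain ⟨k, hk, h⟩ := e.down
  rcases h with ⟨-, ha, hb⟩ | ⟨-, ha, hb⟩ <;> omega

/-- Lift a generating arrow lying on the left side. -/
def liftHomL {m m' : ZigzagWord} {a b : ZigVert (m ++ m')} (e : a ⟶ b)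
    (ha : a.toNat ≤ m.length) (hb : b.toNat ≤ m.length) : vL a ha ⟶ vL b hb :=
  PLift.up (by
    obtain ⟨k, hk, h⟩ := e.down
    have hk' : k < m.length := by
      rcases h with ⟨-, ha', hb'⟩ | ⟨-, ha', hb'⟩ <;> omega
    refine ⟨k, hk', ?_⟩
    have hget : m[k]'hk' = (m ++ m')[k]'hk := (List.getElem_append_left hk').symm
    rcases h with ⟨hA, ha', hb'⟩ | ⟨hW, ha', hb'⟩
    · exact Or.inl ⟨hget.trans hA, ha', hb'⟩
    · exact Or.inr ⟨hget.trans hW, ha', hb'⟩)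

/-- Lift a generating arrow lying on the right side. -/
def liftHomR {m m' : ZigzagWord} {a b : ZigVert (m ++ m')} (e : a ⟶ b)
    (ha : m.length ≤ a.toNat) (hb : m.length ≤ b.toNat) : vR a ha ⟶ vR b hb :=
  PLift.up (by
    obtain ⟨k, hk, h⟩ := e.down
    have hlen : k < m.length + m'.length := by simpa [List.length_append] using hk
    have hk' : m.length ≤ k := by
      rcases h with ⟨-, ha', hb'⟩ | ⟨-, ha', hb'⟩ <;> omega
    refine ⟨k - m.length, by omega, ?_⟩
    have hget : m'[k - m.length]'(by omega) = (m ++ m')[k]'hk := by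
      have := List.getElem_append_right (as := m) (bs := m') (i := k) hk' (h₂ := by omega)
      exact this.symm
    rcases h with ⟨hA, ha', hb'⟩ | ⟨hW, ha', hb'⟩
    · exact Or.inl ⟨hget.trans hA,
        show a.toNat - m.length = k - m.length by omega,
        show b.toNat - m.length = k - m.length + 1 by omega⟩
    · exact Or.inr ⟨hget.trans hW,
        show a.toNat - m.length = k - m.length + 1 by omega,
        show b.toNat - m.length = k - m.length by omega⟩)

theorem isWArrowL {m m' : ZigzagWord} {a b : ZigVert (m ++ m')} (e : a ⟶ b)
    (ha : a.toNat ≤ m.length) (hb : b.toNat ≤ m.length)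
    (hw : IsWArrow (m ++ m') e) : IsWArrow m (liftHomL e ha hb) := by
  obtain ⟨k, hk, hWk, ha', hb'⟩ := hw
  have hk' : k < m.length := by omega
  exact ⟨k, hk', (List.getElem_append_left hk' (h' := hk) ▸ hWk), ha', hb'⟩

theorem isWArrowR {m m' : ZigzagWord} {a b : ZigVert (m ++ m')} (e : a ⟶ b)
    (ha : m.length ≤ a.toNat) (hb : m.length ≤ b.toNat)
    (hw : IsWArrow (m ++ m') e) : IsWArrow m' (liftHomR e ha hb) := by
  obtain ⟨k, hk, hWk, ha', hb'⟩ := hw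
  have hlen : k < m.length + m'.length := by simpa [List.length_append] using hk
  have hk' : m.length ≤ k := by omega
  have hget : m'[k - m.length]'(by omega) = (m ++ m')[k]'hk :=
    (List.getElem_append_right (as := m) (bs := m') (i := k) hk' (h₂ := by omega)).symm
  exact ⟨k - m.length, by omega, hget.trans hWk,
    show a.toNat - m.length = k - m.length + 1 by omega,
    show b.toNat - m.length = k - m.length by omega⟩

universe v₂ u₂

theorem map_toPath_congr {V : Type*} [Quiver.{0} V] [∀ a b : V, Subsingleton (a ⟶ b)]
    {C : Type u₂} [Category.{v₂} C] (F : Paths V ⥤ C) {a b a' b' : V} (ha : a = a')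
    (hb : b = b') (e : a ⟶ b) (e' : a' ⟶ b') :
    F.map ((Paths.of _).map e) =
      eqToHom (by rw [ha]) ≫ F.map ((Paths.of _).map e') ≫ eqToHom (by rw [hb]) := by
  subst ha; subst hb
  rw [Subsingleton.elim e e']; simp

theorem app_congr' {C : Type*} {D : Type*} [Category C] [Category D] {F G : C ⥤ D}
    (η : F ⟶ G) {v w : C} (h : v = w) :
    η.app v = eqToHom (by rw [h]) ≫ η.app w ≫ eqToHom (by rw [h]) := by
  subst h; simp

theorem naturality_of_gen {V : Type*} [Quiver.{0} V] {C : Type u₂} [Category.{v₂} C]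
    {F G : Paths V ⥤ C}
    (app : ∀ v : V, F.obj ((Paths.of V).obj v) ⟶ G.obj ((Paths.of V).obj v))
    (h : ∀ (a b : V) (e : a ⟶ b),
      F.map ((Paths.of V).map e) ≫ app b = app a ≫ G.map ((Paths.of V).map e)) :
    ∀ {a b : V} (f : (Paths.of V).obj a ⟶ (Paths.of V).obj b),
      F.map f ≫ app b = app a ≫ G.map f := by
  intro a b f
  refine Paths.induction (fun {a b} f => F.map f ≫ app b = app a ≫ G.map f) ?_ ?_ f
  · intro v
    show F.map (𝟙 ((Paths.of V).obj v)) ≫ app v = app v ≫ G.map (𝟙 ((Paths.of V).obj v))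
    simp
  · intro u v w p q ih
    show F.map (p ≫ (Paths.of V).map q) ≫ app w = app u ≫ G.map (p ≫ (Paths.of V).map q)
    change F.map p ≫ app v = app u ≫ G.map p at ih
    rw [F.map_comp, G.map_comp, Category.assoc, h, ← Category.assoc, ih, Category.assoc]

theorem ext_functor' {V : Type*} [Quiver.{0} V] {C : Type u₂} [Category.{v₂} C]
    {F G : Paths V ⥤ C} (h_obj : F.obj = G.obj)
    (h : ∀ (a b : V) (e : a ⟶ b), F.map ((Paths.of V).map e) =
      eqToHom (congr_fun h_obj ((Paths.of V).obj a)) ≫ G.map ((Paths.of V).map e) ≫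
        eqToHom (congr_fun h_obj.symm ((Paths.of V).obj b))) : F = G :=
  Paths.ext_functor h_obj h

theorem map_conj_congr {V : Type*} [Quiver.{0} V] [∀ a b : V, Subsingleton (a ⟶ b)]
    {C : Type u₂} [Category.{v₂} C] (F : Paths V ⥤ C) {a b a' b' : V} (ha : a = a')
    (hb : b = b') (e : a ⟶ b) (e' : a' ⟶ b') {X Y : C}
    (p : X = F.obj ((Paths.of V).obj a)) (q : F.obj ((Paths.of V).obj b) = Y)
    (r : X = F.obj ((Paths.of V).obj a')) (s : F.obj ((Paths.of V).obj b') = Y) :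
    eqToHom p ≫ F.map ((Paths.of V).map e) ≫ eqToHom q =
      eqToHom r ≫ F.map ((Paths.of V).map e') ≫ eqToHom s := by
  subst ha hb; rw [Subsingleton.elim e e']

theorem eqToHom_conj_conj {C : Type*} [Category C] {a b c d e f g h : C} (M : a ⟶ b)
    (p : c = a) (q : b = d) (p' : e = c) (q' : d = f) (r : g = a) (s : b = h)
    (r' : e = g) (s' : h = f) :
    eqToHom p' ≫ (eqToHom p ≫ M ≫ eqToHom q) ≫ eqToHom q' =
      eqToHom r' ≫ (eqToHom r ≫ M ≫ eqToHom s) ≫ eqToHom s' := by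
  subst p q p' q' r s; simp

theorem eqToHom_conj_conj' {C : Type*} [Category C] {a b c d e f : C} (M : a ⟶ b)
    (p : c = a) (q : b = d) (p' : e = c) (q' : d = f) (r : e = a) (s : b = f) :
    eqToHom p' ≫ (eqToHom p ≫ M ≫ eqToHom q) ≫ eqToHom q' = eqToHom r ≫ M ≫ eqToHom s := by
  subst p q p' q'; simp

theorem eqToHom_conj_self {C : Type*} [Category C] {a b c d : C} (M : a ⟶ b)
    (p : c = a) (q : b = d) (p' : a = c) (q' : d = b) :
    M = eqToHom p' ≫ (eqToHom p ≫ M ≫ eqToHom q) ≫ eqToHom q' := by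
  subst p q; simp

theorem eqToHom_naturality_conj {C D : Type*} [Category C] [Category D] {F G : C ⥤ D}
    (σ : F ⟶ G) {x y : C} (f : x ⟶ y) {A B B' E : D}
    (p1 : A = F.obj x) (p2 : F.obj y = B) (p3 : B = F.obj y) (p4 : G.obj y = E)
    (q1 : A = F.obj x) (q2 : G.obj x = B') (q3 : B' = G.obj x) (q4 : G.obj y = E) :
    (eqToHom p1 ≫ F.map f ≫ eqToHom p2) ≫ eqToHom p3 ≫ σ.app y ≫ eqToHom p4 =
      (eqToHom q1 ≫ σ.app x ≫ eqToHom q2) ≫ eqToHom q3 ≫ G.map f ≫ eqToHom q4 := by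
  subst p2 q2 p4 p1; simp

theorem natTrans_conj_app {C D : Type*} [Category C] [Category D] {F F' G G' : C ⥤ D}
    (h : F = F') (η : F' ⟶ G') (h' : G' = G) (v : C) :
    (eqToHom h ≫ η ≫ eqToHom h').app v =
      eqToHom (by rw [h]) ≫ η.app v ≫ eqToHom (by rw [h']) := by
  subst h; subst h'; simp

section Glue

variable {R : Type u} [Category.{v} R]

section
variable {m m' : ZigzagWord} (S : ZigCat m ⥤ R) (T : ZigCat m' ⥤ R)

/-- Object part of the glued functor. -/
def glueObj (v : ZigVert (m ++ m')) : R :=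
  if h : v.toNat ≤ m.length then S.obj ((Paths.of _).obj (vL v h))
  else T.obj ((Paths.of _).obj (vR v (le_of_not_ge h)))

theorem glueObj_left (v : ZigVert (m ++ m')) (h : v.toNat ≤ m.length) :
    glueObj S T v = S.obj ((Paths.of _).obj (vL v h)) := dif_pos h

variable (hST : S.obj ((Paths.of _).obj (zigTarget m)) = T.obj ((Paths.of _).obj (zigSource m')))

include hST in
theorem glueObj_right (v : ZigVert (m ++ m')) (h : m.length ≤ v.toNat) :
    glueObj S T v = T.obj ((Paths.of _).obj (vR v h)) := by
  unfold glueObj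
  split
  · next h' =>
    have hv : v.toNat = m.length := le_antisymm h' h
    rw [show vL v h' = zigTarget m from vL_eq_tgt hv h',
      show vR v h = zigSource m' from vR_eq_src hv h]
    exact hST
  · rfl

/-- The glued prefunctor on the zigzag quiver of the concatenation. -/
def gluePre : ZigVert (m ++ m') ⥤q R where
  obj := glueObj S T
  map {a b} e :=
    if h : a.toNat ≤ m.length ∧ b.toNat ≤ m.length then
      eqToHom (glueObj_left S T a h.1) ≫ S.map ((Paths.of _).map (liftHomL e h.1 h.2)) ≫
        eqToHom (glueObj_left S T b h.2).symm
    else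
      eqToHom (glueObj_right S T hST a ((zig_side e).resolve_left h).1) ≫
        T.map ((Paths.of _).map (liftHomR e ((zig_side e).resolve_left h).1
          ((zig_side e).resolve_left h).2)) ≫
        eqToHom (glueObj_right S T hST b ((zig_side e).resolve_left h).2).symm

/-- The glued functor. -/
def glueFun : ZigCat (m ++ m') ⥤ R := Paths.lift (gluePre S T hST)

theorem glueFun_obj (v : ZigVert (m ++ m')) :
    (glueFun S T hST).obj ((Paths.of _).obj v) = glueObj S T v := rfl

theorem glueFun_map {a b : ZigVert (m ++ m')} (e : a ⟶ b) :
    (glueFun S T hST).map ((Paths.of _).map e) = (gluePre S T hST).map e :=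
  Paths.lift_toPath _ _

theorem glueFun_map_left {a b : ZigVert (m ++ m')} (e : a ⟶ b)
    (ha : a.toNat ≤ m.length) (hb : b.toNat ≤ m.length) :
    (glueFun S T hST).map ((Paths.of _).map e) =
      eqToHom (glueObj_left S T a ha) ≫ S.map ((Paths.of _).map (liftHomL e ha hb)) ≫
        eqToHom (glueObj_left S T b hb).symm := by
  rw [glueFun_map]
  show dite _ _ _ = _
  exact dif_pos ⟨ha, hb⟩

theorem glueFun_map_right {a b : ZigVert (m ++ m')} (e : a ⟶ b)
    (hab : ¬(a.toNat ≤ m.length ∧ b.toNat ≤ m.length)) :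
    (glueFun S T hST).map ((Paths.of _).map e) =
      eqToHom (glueObj_right S T hST a ((zig_side e).resolve_left hab).1) ≫
        T.map ((Paths.of _).map (liftHomR e ((zig_side e).resolve_left hab).1
          ((zig_side e).resolve_left hab).2)) ≫
        eqToHom (glueObj_right S T hST b ((zig_side e).resolve_left hab).2).symm := by
  rw [glueFun_map]
  show dite _ _ _ = _
  exact dif_neg hab

theorem glue_restrictL : zigIncl₁ m m' ⋙ glueFun S T hST = S := by
  fapply ext_functor'
  · funext v
    change ZigVert m at v
    show glueObj S T ((zigIncl₁Prefunctor m m').obj v) = S.obj v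
    have hv : ((zigIncl₁Prefunctor m m').obj v).toNat ≤ m.length := by
      rw [incl₁_obj_toNat]; exact zigvert_le v
    rw [glueObj_left S T _ hv, incl₁_obj_eq v hv]
    rfl
  · intro a b e
    have h1 : (zigIncl₁ m m').map ((Paths.of _).map e) =
        (Paths.of _).map ((zigIncl₁Prefunctor m m').map e) := by
      exact Paths.lift_toPath _ _
    rw [Functor.comp_map, h1]
    have ha : ((zigIncl₁Prefunctor m m').obj a).toNat ≤ m.length := by
      rw [incl₁_obj_toNat]; exact zigvert_le a
    have hb : ((zigIncl₁Prefunctor m m').obj b).toNat ≤ m.length := by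
      rw [incl₁_obj_toNat]; exact zigvert_le b
    exact (glueFun_map_left S T hST _ ha hb).trans
      (map_conj_congr S (incl₁_obj_eq a ha) (incl₁_obj_eq b hb) _ e _ _ _ _)

theorem glue_restrictR : zigIncl₂ m m' ⋙ glueFun S T hST = T := by
  fapply ext_functor'
  · funext v
    change ZigVert m' at v
    show glueObj S T ((zigIncl₂Prefunctor m m').obj v) = T.obj v
    have hv : m.length ≤ ((zigIncl₂Prefunctor m m').obj v).toNat := by
      rw [incl₂_obj_toNat]; omega
    rw [glueObj_right S T hST _ hv, vR_incl₂ v hv]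
    rfl
  · intro a b e
    have h1 : (zigIncl₂ m m').map ((Paths.of _).map e) =
        (Paths.of _).map ((zigIncl₂Prefunctor m m').map e) := by
      exact Paths.lift_toPath _ _
    rw [Functor.comp_map, h1]
    have ha : m.length ≤ ((zigIncl₂Prefunctor m m').obj a).toNat := by
      rw [incl₂_obj_toNat]; omega
    have hb : m.length ≤ ((zigIncl₂Prefunctor m m').obj b).toNat := by
      rw [incl₂_obj_toNat]; omega
    have hab : ¬(((zigIncl₂Prefunctor m m').obj a).toNat ≤ m.length ∧
        ((zigIncl₂Prefunctor m m').obj b).toNat ≤ m.length) := by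
      obtain ⟨k, hk, h⟩ := e.down
      rw [not_and_or, incl₂_obj_toNat, incl₂_obj_toNat]
      rcases h with ⟨-, ha', hb'⟩ | ⟨-, ha', hb'⟩ <;> omega
    exact (glueFun_map_right S T hST _ hab).trans
      (map_conj_congr T (vR_incl₂ a ha) (vR_incl₂ b hb) _ e _ _ _ _)

theorem glue_congr {S S' : ZigCat m ⥤ R} {T T' : ZigCat m' ⥤ R} (hS : S = S') (hT : T = T')
    (h : S.obj ((Paths.of _).obj (zigTarget m)) = T.obj ((Paths.of _).obj (zigSource m')))
    (h' : S'.obj ((Paths.of _).obj (zigTarget m)) = T'.obj ((Paths.of _).obj (zigSource m'))) :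
    glueFun S T h = glueFun S' T' h' := by
  subst hS; subst hT; rfl

theorem glue_eta (U : ZigCat (m ++ m') ⥤ R)
    (h : (zigIncl₁ m m' ⋙ U).obj ((Paths.of _).obj (zigTarget m)) =
      (zigIncl₂ m m' ⋙ U).obj ((Paths.of _).obj (zigSource m'))) :
    glueFun (zigIncl₁ m m' ⋙ U) (zigIncl₂ m m' ⋙ U) h = U := by
  fapply ext_functor'
  · funext v
    show glueObj _ _ v = U.obj v
    by_cases hv : v.toNat ≤ m.length
    · rw [glueObj_left _ _ _ hv]
      rfl
    · rw [glueObj_right _ _ h _ (le_of_not_ge hv)]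
      exact congrArg U.obj (congrArg ((Paths.of _).obj) (incl₂_vR v (le_of_not_ge hv)))
  · intro a b e
    by_cases hc : a.toNat ≤ m.length ∧ b.toNat ≤ m.length
    · rw [glueFun_map_left _ _ h e hc.1 hc.2]
      have hmap : (zigIncl₁ m m' ⋙ U).map ((Paths.of _).map (liftHomL e hc.1 hc.2)) =
          U.map ((Paths.of _).map ((zigIncl₁Prefunctor m m').map (liftHomL e hc.1 hc.2))) := rfl
      rw [hmap, Subsingleton.elim ((zigIncl₁Prefunctor m m').map (liftHomL e hc.1 hc.2)) e]
      rfl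
    · rw [glueFun_map_right _ _ h e hc]
      have hr := (zig_side e).resolve_left hc
      have hmap : (zigIncl₂ m m' ⋙ U).map ((Paths.of _).map (liftHomR e hr.1 hr.2)) =
          U.map ((Paths.of _).map ((zigIncl₂Prefunctor m m').map (liftHomR e hr.1 hr.2))) := rfl
      rw [hmap, map_toPath_congr U (incl₂_vR a hr.1) (incl₂_vR b hr.2)
        ((zigIncl₂Prefunctor m m').map (liftHomR e hr.1 hr.2)) e]
      exact eqToHom_conj_conj' _ _ _ _ _ _ _

end

section
variable {m m' : ZigzagWord} {S S' S'' : ZigCat m ⥤ R} {T T' T'' : ZigCat m' ⥤ R}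

/-- Glued components of a pair of natural transformations. -/
def glueApp (hST : S.obj ((Paths.of _).obj (zigTarget m)) = T.obj ((Paths.of _).obj (zigSource m')))
    (hST' : S'.obj ((Paths.of _).obj (zigTarget m)) = T'.obj ((Paths.of _).obj (zigSource m')))
    (σ : S ⟶ S') (τ : T ⟶ T') (v : ZigVert (m ++ m')) : glueObj S T v ⟶ glueObj S' T' v :=
  if h : v.toNat ≤ m.length then
    eqToHom (glueObj_left S T v h) ≫ σ.app ((Paths.of _).obj (vL v h)) ≫
      eqToHom (glueObj_left S' T' v h).symm
  else
    eqToHom (glueObj_right S T hST v (le_of_not_ge h)) ≫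
      τ.app ((Paths.of _).obj (vR v (le_of_not_ge h))) ≫
      eqToHom (glueObj_right S' T' hST' v (le_of_not_ge h)).symm

variable (hST : S.obj ((Paths.of _).obj (zigTarget m)) = T.obj ((Paths.of _).obj (zigSource m')))
  (hST' : S'.obj ((Paths.of _).obj (zigTarget m)) = T'.obj ((Paths.of _).obj (zigSource m')))
  (hST'' : S''.obj ((Paths.of _).obj (zigTarget m)) = T''.obj ((Paths.of _).obj (zigSource m')))

theorem glueApp_left (σ : S ⟶ S') (τ : T ⟶ T') (v : ZigVert (m ++ m'))
    (h : v.toNat ≤ m.length) :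
    glueApp hST hST' σ τ v = eqToHom (glueObj_left S T v h) ≫
      σ.app ((Paths.of _).obj (vL v h)) ≫ eqToHom (glueObj_left S' T' v h).symm :=
  dif_pos h

theorem glueApp_right (σ : S ⟶ S') (τ : T ⟶ T')
    (hcomp : σ.app ((Paths.of _).obj (zigTarget m)) =
      eqToHom hST ≫ τ.app ((Paths.of _).obj (zigSource m')) ≫ eqToHom hST'.symm)
    (v : ZigVert (m ++ m')) (h : m.length ≤ v.toNat) :
    glueApp hST hST' σ τ v = eqToHom (glueObj_right S T hST v h) ≫
      τ.app ((Paths.of _).obj (vR v h)) ≫ eqToHom (glueObj_right S' T' hST' v h).symm := by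
  unfold glueApp
  split
  · next h' =>
    have hv : v.toNat = m.length := le_antisymm h' h
    rw [app_congr' σ (show (Paths.of _).obj (vL v h') = (Paths.of _).obj (zigTarget m) from
        congrArg _ (vL_eq_tgt hv h')), hcomp,
      app_congr' τ (show (Paths.of _).obj (zigSource m') = (Paths.of _).obj (vR v h) from
        congrArg _ (vR_eq_src hv h).symm)]
    simp [eqToHom_trans]
  · next h' => rfl

theorem glueApp_mem (W : MorphismProperty R) [W.IsMultiplicative]
    (σ : S ⟶ S') (τ : T ⟶ T') (hσ : ∀ v, W (σ.app v)) (hτ : ∀ v, W (τ.app v))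
    (v : ZigVert (m ++ m')) : W (glueApp hST hST' σ τ v) := by
  have hE : ∀ {a b : R} (h : a = b), W (eqToHom h) := by
    intro a b h; subst h; exact W.id_mem a
  unfold glueApp
  split
  · exact W.comp_mem _ _ (hE _) (W.comp_mem _ _ (hσ _) (hE _))
  · exact W.comp_mem _ _ (hE _) (W.comp_mem _ _ (hτ _) (hE _))

theorem glueApp_id (v : ZigVert (m ++ m')) :
    glueApp hST hST (𝟙 S) (𝟙 T) v = 𝟙 (glueObj S T v) := by
  unfold glueApp
  split <;> simp

theorem glueApp_comp (σ : S ⟶ S') (σ' : S' ⟶ S'') (τ : T ⟶ T') (τ' : T' ⟶ T'')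
    (v : ZigVert (m ++ m')) :
    glueApp hST hST'' (σ ≫ σ') (τ ≫ τ') v =
      glueApp hST hST' σ τ v ≫ glueApp hST' hST'' σ' τ' v := by
  unfold glueApp
  split <;> simp

/-- The glued natural transformation. -/
def glueNat (σ : S ⟶ S') (τ : T ⟶ T')
    (hcomp : σ.app ((Paths.of _).obj (zigTarget m)) =
      eqToHom hST ≫ τ.app ((Paths.of _).obj (zigSource m')) ≫ eqToHom hST'.symm) :
    glueFun S T hST ⟶ glueFun S' T' hST' where
  app v := glueApp hST hST' σ τ v
  naturality {a b} f := by
    refine naturality_of_gen (F := glueFun S T hST) (G := glueFun S' T' hST')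
      (fun v => glueApp hST hST' σ τ v) ?_ f
    intro a b e
    beta_reduce
    by_cases hc : a.toNat ≤ m.length ∧ b.toNat ≤ m.length
    · rw [glueFun_map_left S T hST e hc.1 hc.2, glueFun_map_left S' T' hST' e hc.1 hc.2,
        glueApp_left hST hST' σ τ a hc.1, glueApp_left hST hST' σ τ b hc.2]
      exact eqToHom_naturality_conj _ _ _ _ _ _ _ _ _ _
    · have hr := (zig_side e).resolve_left hc
      rw [glueFun_map_right S T hST e hc, glueFun_map_right S' T' hST' e hc,
        glueApp_right hST hST' σ τ hcomp a hr.1, glueApp_right hST hST' σ τ hcomp b hr.2]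
      exact eqToHom_naturality_conj _ _ _ _ _ _ _ _ _ _

theorem glueNat_app (σ : S ⟶ S') (τ : T ⟶ T') (hcomp) (v : ZigVert (m ++ m')) :
    (glueNat hST hST' σ τ hcomp).app ((Paths.of _).obj v) = glueApp hST hST' σ τ v := rfl

end

end Glue

section Assemble

open CategoryTheory

variable {R : Type u} [Category.{v} R] {W : MorphismProperty R} [W.IsMultiplicative]
  {x y : R} {m m' : ZigzagWord}

theorem eqToHom_mem (W : MorphismProperty R) [W.IsMultiplicative] {a b : R} (h : a = b) :
    W (eqToHom h) := by
  subst h; simpa using W.id_mem a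

theorem FunS_ext_T {X Y : FunS m W x} (h : X.T = Y.T) : X = Y := by
  cases X; cases Y; dsimp at h; subst h; rfl

theorem FunT_ext_T {X Y : FunT m' W y} (h : X.T = Y.T) : X = Y := by
  cases X; cases Y; dsimp at h; subst h; rfl

theorem ZigBoth_ext_T {X Y : ZigBoth (m ++ m') W x y} (h : X.T = Y.T) : X = Y := by
  cases X; cases Y; dsimp at h; subst h; rfl

theorem FunS_eqToHom_η {X Y : FunS m W x} (h : X = Y) :
    (eqToHom h).η = eqToHom (congrArg FunS.T h) := by
  subst h; rfl

theorem FunT_eqToHom_η {X Y : FunT m' W y} (h : X = Y) :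
    (eqToHom h).η = eqToHom (congrArg FunT.T h) := by
  subst h; rfl

theorem ZigBoth_eqToHom_η {X Y : ZigBoth (m ++ m') W x y} (h : X = Y) :
    (eqToHom h).η = eqToHom (congrArg ZigBoth.T h) := by
  subst h; rfl

theorem WideSub_eqToHom_val {a b : WideSub W} (h : a = b) :
    (eqToHom h).1 = eqToHom (congrArg (fun t => (show R from t)) h) := by
  subst h; rfl

theorem wideSub_comp_val {a b c : WideSub W} (f : a ⟶ b) (g : b ⟶ c) :
    (f ≫ g).1 = f.1 ≫ g.1 := rfl

/-- Gluing of objects. -/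
def glueZig (X : FunS m W x) (Y : FunT m' W y)
    (hST : X.T.obj ((Paths.of _).obj (zigTarget m)) = Y.T.obj ((Paths.of _).obj (zigSource m'))) :
    ZigBoth (m ++ m') W x y where
  T := glueFun X.T Y.T hST
  rel := by
    intro a b e he
    by_cases hc : a.toNat ≤ m.length ∧ b.toNat ≤ m.length
    · rw [glueFun_map_left X.T Y.T hST e hc.1 hc.2]
      exact W.comp_mem _ _ (eqToHom_mem W _)
        (W.comp_mem _ _ (X.rel _ (isWArrowL e hc.1 hc.2 he)) (eqToHom_mem W _))
    · rw [glueFun_map_right X.T Y.T hST e hc]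
      have hr := (zig_side e).resolve_left hc
      exact W.comp_mem _ _ (eqToHom_mem W _)
        (W.comp_mem _ _ (Y.rel _ (isWArrowR e hr.1 hr.2 he)) (eqToHom_mem W _))
  hx := by
    have h0 : (zigSource (m ++ m')).toNat ≤ m.length := by rw [src_toNat]; omega
    show glueObj X.T Y.T (zigSource (m ++ m')) = x
    rw [glueObj_left X.T Y.T _ h0,
      show vL (zigSource (m ++ m')) h0 = zigSource m from vL_src h0]
    exact X.hx
  hy := by
    have h1 : m.length ≤ (zigTarget (m ++ m')).toNat := by
      rw [tgt_toNat]; simp [List.length_append]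
    show glueObj X.T Y.T (zigTarget (m ++ m')) = y
    rw [glueObj_right X.T Y.T hST _ h1,
      show vR (zigTarget (m ++ m')) h1 = zigTarget m' from vR_tgt h1]
    exact Y.hy

variable {P : Type u₂} [Category.{v₂} P]

theorem hST_of (F : P ⥤ FunT m' W y) (G : P ⥤ FunS m W x)
    (hc : F ⋙ evalSource m' W y = G ⋙ evalTarget m W x) (c : P) :
    (G.obj c).T.obj ((Paths.of _).obj (zigTarget m)) =
      (F.obj c).T.obj ((Paths.of _).obj (zigSource m')) :=
  (Functor.congr_obj hc c).symm

theorem hcomp_of (F : P ⥤ FunT m' W y) (G : P ⥤ FunS m W x)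
    (hc : F ⋙ evalSource m' W y = G ⋙ evalTarget m W x) {c c' : P} (f : c ⟶ c') :
    (G.map f).η.app ((Paths.of _).obj (zigTarget m)) =
      eqToHom (hST_of F G hc c) ≫
        (F.map f).η.app ((Paths.of _).obj (zigSource m')) ≫
        eqToHom ((hST_of F G hc c').symm) := by
  have hv := congrArg Subtype.val (Functor.congr_hom hc f)
  rw [show ((F ⋙ evalSource m' W y).map f).val =
      (F.map f).η.app ((Paths.of _).obj (zigSource m')) from rfl] at hv
  rw [wideSub_comp_val, wideSub_comp_val] at hv
  rw [show ((G ⋙ evalTarget m W x).map f).val =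
      (G.map f).η.app ((Paths.of _).obj (zigTarget m)) from rfl] at hv
  rw [WideSub_eqToHom_val, WideSub_eqToHom_val] at hv
  rw [hv]
  exact eqToHom_conj_self _ _ _ _ _

/-- The lift functor into the glued category. -/
def liftAux (F : P ⥤ FunT m' W y) (G : P ⥤ FunS m W x)
    (hc : F ⋙ evalSource m' W y = G ⋙ evalTarget m W x) :
    P ⥤ ZigBoth (m ++ m') W x y where
  obj c := glueZig (G.obj c) (F.obj c) (hST_of F G hc c)
  map {c c'} f :=
    { η := glueNat _ _ ((G.map f).η) ((F.map f).η) (hcomp_of F G hc f)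
      mem := fun v => glueApp_mem (hST_of F G hc c) (hST_of F G hc c') W _ _
        ((G.map f).mem) ((F.map f).mem) v
      h₀ := by
        have h0 : (zigSource (m ++ m')).toNat ≤ m.length := by rw [src_toNat]; omega
        show glueApp (hST_of F G hc c) (hST_of F G hc c') ((G.map f).η) ((F.map f).η)
          (zigSource (m ++ m')) = _
        rw [glueApp_left _ _ _ _ _ h0,
          app_congr' ((G.map f).η) (congrArg (Paths.of _).obj (vL_src h0)), (G.map f).h₀]
        simp [eqToHom_trans]
        rfl
      hₚ := by
        have h1 : m.length ≤ (zigTarget (m ++ m')).toNat := by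
          rw [tgt_toNat]; simp [List.length_append]
        show glueApp (hST_of F G hc c) (hST_of F G hc c') ((G.map f).η) ((F.map f).η)
          (zigTarget (m ++ m')) = _
        rw [glueApp_right _ _ _ _ (hcomp_of F G hc f) _ h1,
          app_congr' ((F.map f).η) (congrArg (Paths.of _).obj (vR_tgt h1)), (F.map f).hₚ]
        simp [eqToHom_trans]
        rfl }
  map_id c := by
    apply ZigBoth.Hom.ext'
    apply NatTrans.ext
    funext v
    show glueApp (hST_of F G hc c) (hST_of F G hc c) ((G.map (𝟙 c)).η) ((F.map (𝟙 c)).η) v =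
      𝟙 (glueObj (G.obj c).T (F.obj c).T v)
    rw [G.map_id, F.map_id]
    exact glueApp_id _ v
  map_comp {c c' c''} f g := by
    apply ZigBoth.Hom.ext'
    apply NatTrans.ext
    funext v
    show glueApp (hST_of F G hc c) (hST_of F G hc c'') ((G.map (f ≫ g)).η)
        ((F.map (f ≫ g)).η) v =
      glueApp (hST_of F G hc c) (hST_of F G hc c') ((G.map f).η) ((F.map f).η) v ≫
        glueApp (hST_of F G hc c') (hST_of F G hc c'') ((G.map g).η) ((F.map g).η) v
    rw [G.map_comp, F.map_comp]
    exact glueApp_comp (hST_of F G hc c) (hST_of F G hc c') (hST_of F G hc c'')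
      ((G.map f).η) ((G.map g).η) ((F.map f).η) ((F.map g).η) v

end Assemble

section Final

open CategoryTheory

variable {R : Type u} [Category.{v} R] {W : MorphismProperty R} [W.IsMultiplicative]
  {x y : R} {m m' : ZigzagWord}

theorem FunS_comp_η {X Y Z : FunS m W x} (f : X ⟶ Y) (g : Y ⟶ Z) :
    (f ≫ g).η = f.η ≫ g.η := rfl

theorem FunT_comp_η {X Y Z : FunT m' W y} (f : X ⟶ Y) (g : Y ⟶ Z) :
    (f ≫ g).η = f.η ≫ g.η := rfl

theorem ZigBoth_comp_η {X Y Z : ZigBoth (m ++ m') W x y} (f : X ⟶ Y) (g : Y ⟶ Z) :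
    (f ≫ g).η = f.η ≫ g.η := rfl

variable {P : Type u₂} [Category.{v₂} P]

theorem liftAux_map_η_app (F : P ⥤ FunT m' W y) (G : P ⥤ FunS m W x)
    (hc : F ⋙ evalSource m' W y = G ⋙ evalTarget m W x) {c c' : P} (f : c ⟶ c')
    (v : ZigCat (m ++ m')) :
    ((liftAux F G hc).map f).η.app v =
      glueApp (hST_of F G hc c) (hST_of F G hc c') ((G.map f).η) ((F.map f).η) v := rfl

theorem liftAux_fst (F : P ⥤ FunT m' W y) (G : P ⥤ FunS m W x)
    (hc : F ⋙ evalSource m' W y = G ⋙ evalTarget m W x) :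
    liftAux F G hc ⋙ restrictRight W x y m m' = F := by
  fapply CategoryTheory.Functor.ext
  · intro c
    exact FunT_ext_T (glue_restrictR (G.obj c).T (F.obj c).T (hST_of F G hc c))
  · intro c c' f
    apply FunT.Hom.ext'
    apply NatTrans.ext
    funext v
    change ZigVert m' at v
    have h2 : m.length ≤ ((zigIncl₂Prefunctor m m').obj v).toNat := by
      rw [incl₂_obj_toNat]; omega
    show glueApp (hST_of F G hc c) (hST_of F G hc c') ((G.map f).η) ((F.map f).η)
      ((zigIncl₂Prefunctor m m').obj v) = _
    rw [glueApp_right _ _ _ _ (hcomp_of F G hc f) _ h2,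
      app_congr' ((F.map f).η) (congrArg (Paths.of _).obj (vR_incl₂ v h2))]
    simp only [FunT_comp_η, FunT_eqToHom_η, NatTrans.comp_app, eqToHom_app]
    simp [eqToHom_trans]
    refine Eq.trans ?_ (natTrans_conj_app (C := ZigCat m') (D := R)
      (F := ((liftAux F G hc ⋙ restrictRight W x y m m').obj c).T)
      (G := ((liftAux F G hc ⋙ restrictRight W x y m m').obj c').T) _ (F.map f).η _
      v).symm
    rfl

theorem liftAux_snd (F : P ⥤ FunT m' W y) (G : P ⥤ FunS m W x)
    (hc : F ⋙ evalSource m' W y = G ⋙ evalTarget m W x) :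
    liftAux F G hc ⋙ restrictLeft W x y m m' = G := by
  fapply CategoryTheory.Functor.ext
  · intro c
    exact FunS_ext_T (glue_restrictL (G.obj c).T (F.obj c).T (hST_of F G hc c))
  · intro c c' f
    apply FunS.Hom.ext'
    apply NatTrans.ext
    funext v
    change ZigVert m at v
    have h1 : ((zigIncl₁Prefunctor m m').obj v).toNat ≤ m.length := by
      rw [incl₁_obj_toNat]; exact zigvert_le v
    show glueApp (hST_of F G hc c) (hST_of F G hc c') ((G.map f).η) ((F.map f).η)
      ((zigIncl₁Prefunctor m m').obj v) = _
    rw [glueApp_left _ _ _ _ _ h1,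
      app_congr' ((G.map f).η) (congrArg (Paths.of _).obj (incl₁_obj_eq v h1))]
    simp only [FunS_comp_η, FunS_eqToHom_η, NatTrans.comp_app, eqToHom_app]
    simp [eqToHom_trans]
    refine Eq.trans ?_ (natTrans_conj_app (C := ZigCat m) (D := R)
      (F := ((liftAux F G hc ⋙ restrictLeft W x y m m').obj c).T)
      (G := ((liftAux F G hc ⋙ restrictLeft W x y m m').obj c').T) _ (G.map f).η _
      v).symm
    rfl

theorem liftAux_uniq (F : P ⥤ FunT m' W y) (G : P ⥤ FunS m W x)
    (hc : F ⋙ evalSource m' W y = G ⋙ evalTarget m W x)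
    (M : P ⥤ ZigBoth (m ++ m') W x y)
    (h1 : M ⋙ restrictRight W x y m m' = F)
    (h2 : M ⋙ restrictLeft W x y m m' = G) :
    M = liftAux F G hc := by
  fapply CategoryTheory.Functor.ext
  · intro c
    apply ZigBoth_ext_T
    show (M.obj c).T = glueFun (G.obj c).T (F.obj c).T (hST_of F G hc c)
    have e1 : (G.obj c).T = zigIncl₁ m m' ⋙ (M.obj c).T :=
      congrArg FunS.T (Functor.congr_obj h2 c).symm
    have e2 : (F.obj c).T = zigIncl₂ m m' ⋙ (M.obj c).T :=
      congrArg FunT.T (Functor.congr_obj h1 c).symm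
    have hU : (zigIncl₁ m m' ⋙ (M.obj c).T).obj ((Paths.of _).obj (zigTarget m)) =
        (zigIncl₂ m m' ⋙ (M.obj c).T).obj ((Paths.of _).obj (zigSource m')) := by
      rw [← e1, ← e2]; exact hST_of F G hc c
    exact ((glue_congr e1 e2 (hST_of F G hc c) hU).trans (glue_eta (M.obj c).T hU)).symm
  · intro c c' f
    apply ZigBoth.Hom.ext'
    apply NatTrans.ext
    funext v
    simp only [ZigBoth_comp_η, ZigBoth_eqToHom_η, NatTrans.comp_app, eqToHom_app,
      liftAux_map_η_app]
    by_cases hv : ZigVert.toNat (m := m ++ m') v ≤ m.length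
    · rw [glueApp_left _ _ _ _ _ hv]
      have happ := NatTrans.congr_app (congrArg FunS.Hom.η (Functor.congr_hom h2 f))
        ((Paths.of _).obj (vL v hv))
      rw [show (((M ⋙ restrictLeft W x y m m').map f).η).app ((Paths.of _).obj (vL v hv)) =
        (M.map f).η.app ((Paths.of _).obj v) from rfl] at happ
      rw [FunS_comp_η, FunS_comp_η, FunS_eqToHom_η, FunS_eqToHom_η, NatTrans.comp_app,
        NatTrans.comp_app, eqToHom_app, eqToHom_app] at happ
      rw [show (M.map f).η.app v = (M.map f).η.app ((Paths.of _).obj v) from rfl, happ]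
      exact (eqToHom_conj_conj' _ _ _ _ _ _ _).symm
    · have hle := le_of_not_ge hv
      rw [glueApp_right _ _ _ _ (hcomp_of F G hc f) _ hle]
      have happ := NatTrans.congr_app (congrArg FunT.Hom.η (Functor.congr_hom h1 f))
        ((Paths.of _).obj (vR v hle))
      rw [show (((M ⋙ restrictRight W x y m m').map f).η).app ((Paths.of _).obj (vR v hle)) =
        (M.map f).η.app ((Paths.of _).obj ((zigIncl₂Prefunctor m m').obj (vR v hle))) from rfl]
        at happ
      rw [FunT_comp_η, FunT_comp_η, FunT_eqToHom_η, FunT_eqToHom_η, NatTrans.comp_app,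
        NatTrans.comp_app, eqToHom_app, eqToHom_app] at happ
      rw [show (M.map f).η.app v = (M.map f).η.app ((Paths.of _).obj v) from rfl,
        app_congr' ((M.map f).η) (congrArg (Paths.of _).obj (incl₂_vR v hle).symm), happ]
      exact eqToHom_conj_conj _ _ _ _ _ _ _ _ _


/-- The category of zigzags of concatenated type `[m; m']` from `x` to `y` is the fiber
product, over the wide subcategory `𝒲`, of the two half-pointed zigzag categories: the
square with top-left corner `(m ++ m')(x, y)`, top map restriction along `ι'`, left map
restriction along `ι`, right map evaluation at the vertex `0` of `Z(m')`, and bottom map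
evaluation at the vertex `p` of `Z(m)`, commutes and is a pullback square in `Cat`. -/
theorem zigzag_concat_isPullback {R : Type u} [Category.{u} R]
    (W : MorphismProperty R) [W.IsMultiplicative] (x y : R) (m m' : ZigzagWord) :
    IsPullback
      (P := Cat.of (ZigBoth (m ++ m') W x y)) (X := Cat.of (FunT m' W y))
      (Y := Cat.of (FunS m W x)) (Z := Cat.of (WideSub W))
      (restrictRight W x y m m').toCatHom (restrictLeft W x y m m').toCatHom
      (evalSource m' W y).toCatHom (evalTarget m W x).toCatHom := by
  have hcomm : restrictRight W x y m m' ⋙ evalSource m' W y =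
      restrictLeft W x y m m' ⋙ evalTarget m W x := by
    fapply CategoryTheory.Functor.ext
    · intro X
      show WideSub.mk W (X.T.obj ((Paths.of _).obj ((zigIncl₂Prefunctor m m').obj (zigSource m')))) =
        WideSub.mk W (X.T.obj ((Paths.of _).obj ((zigIncl₁Prefunctor m m').obj (zigTarget m))))
      exact congrArg (fun t => WideSub.mk W (X.T.obj ((Paths.of _).obj t))) (junction_eq m m')
    · intro X Y f
      apply Subtype.ext
      rw [wideSub_comp_val, wideSub_comp_val, WideSub_eqToHom_val, WideSub_eqToHom_val]
      show f.η.app ((Paths.of _).obj ((zigIncl₂Prefunctor m m').obj (zigSource m'))) = _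
      rw [app_congr' f.η (congrArg (Paths.of _).obj (junction_eq m m'))]
      simp only [eqToHom_trans, eqToHom_refl, Category.comp_id, Category.id_comp]
      rfl
  refine CategoryTheory.IsPullback.of_isLimit' ⟨congrArg Functor.toCatHom hcomm⟩ ?_
  exact Limits.PullbackCone.IsLimit.mk _
    (fun s => (liftAux s.fst.toFunctor s.snd.toFunctor
      (congrArg Cat.Hom.toFunctor s.condition)).toCatHom)
    (fun s => Cat.ext (liftAux_fst s.fst.toFunctor s.snd.toFunctor
      (congrArg Cat.Hom.toFunctor s.condition)))
    (fun s => Cat.ext (liftAux_snd s.fst.toFunctor s.snd.toFunctor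
      (congrArg Cat.Hom.toFunctor s.condition)))
    (fun s M hM1 hM2 => Cat.ext (liftAux_uniq s.fst.toFunctor s.snd.toFunctor
      (congrArg Cat.Hom.toFunctor s.condition) M.toFunctor
      (congrArg Cat.Hom.toFunctor hM1) (congrArg Cat.Hom.toFunctor hM2)))
end Final
end ZigGlueAux
end
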